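/- arXiv:1603.09079 — 10 statements merged into one kernel-verified Lean document; each statement's English description precedes it below -/
import Mathlib

section
/- Let x₀, y₀ be real numbers and let u, a, f : ℝ × ℝ → ℝ be continuous functions that are nonnegative on Q = [x₀,∞) × [y₀,∞), with a nondecreasing in each of its two variables on Q. If for all (x,y) ∈ Q one has u(x,y) ≤ a(x,y) + ∫_{x₀}^{x} ∫_{y₀}^{y} f(s,t) u(s,t) dt ds, then for all (x,y) ∈ Q one has u(x,y) ≤ a(x,y) · exp(∫_{x₀}^{x} ∫_{y₀}^{y} f(s,t) dt ds). -/
/-- Continuous (𝕋 = ℝ) case of the two-variable Gronwall-type lemma: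
if `u(x,y) ≤ a(x,y) + ∫_{x₀}^{x} ∫_{y₀}^{y} f(s,t) u(s,t) dt ds` on
`Q = [x₀,∞) × [y₀,∞)`, with `u, a, f` continuous and nonnegative on `Q`
and `a` nondecreasing in each variable on `Q`, then
`u(x,y) ≤ a(x,y) · exp (∫_{x₀}^{x} ∫_{y₀}^{y} f(s,t) dt ds)` on `Q`. -/
theorem stmt_0 (x₀ y₀ : ℝ) (u a f : ℝ → ℝ → ℝ)
    (hu_cont : Continuous (fun p : ℝ × ℝ => u p.1 p.2))
    (ha_cont : Continuous (fun p : ℝ × ℝ => a p.1 p.2))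
    (hf_cont : Continuous (fun p : ℝ × ℝ => f p.1 p.2))
    (hu_nonneg : ∀ x, x₀ ≤ x → ∀ y, y₀ ≤ y → 0 ≤ u x y)
    (ha_nonneg : ∀ x, x₀ ≤ x → ∀ y, y₀ ≤ y → 0 ≤ a x y)
    (hf_nonneg : ∀ x, x₀ ≤ x → ∀ y, y₀ ≤ y → 0 ≤ f x y)
    (ha_mono1 : ∀ x₁ x₂ y, x₀ ≤ x₁ → x₁ ≤ x₂ → y₀ ≤ y → a x₁ y ≤ a x₂ y)
    (ha_mono2 : ∀ x y₁ y₂, x₀ ≤ x → y₀ ≤ y₁ → y₁ ≤ y₂ → a x y₁ ≤ a x y₂)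
    (hineq : ∀ x, x₀ ≤ x → ∀ y, y₀ ≤ y →
      u x y ≤ a x y + ∫ s in x₀..x, ∫ t in y₀..y, f s t * u s t) :
    ∀ x, x₀ ≤ x → ∀ y, y₀ ≤ y →
      u x y ≤ a x y * Real.exp (∫ s in x₀..x, ∫ t in y₀..y, f s t) := by
  intro X hX Y hY
  set A := a X Y with hA
  -- continuity of the combined integrand
  have hF : Continuous (fun p : ℝ × ℝ => f p.1 p.2 * u p.1 p.2) := hf_cont.mul hu_cont
  set g : ℝ → ℝ := fun x => ∫ t in y₀..Y, f x t * u x t with hgdef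
  set p : ℝ → ℝ := fun x => ∫ t in y₀..Y, f x t with hpdef
  set v : ℝ → ℝ := fun x => ∫ s in x₀..x, g s with hvdef
  set P : ℝ → ℝ := fun x => ∫ s in x₀..x, p s with hPdef
  have hg : Continuous g :=
    intervalIntegral.continuous_parametric_intervalIntegral_of_continuous'
      (f := fun x t => f x t * u x t) hF y₀ Y
  have hp : Continuous p :=
    intervalIntegral.continuous_parametric_intervalIntegral_of_continuous'
      (f := fun x t => f x t) hf_cont y₀ Y
  have hv : ∀ x, HasDerivAt v (g x) x := fun x =>
    intervalIntegral.integral_hasDerivAt_right (hg.intervalIntegrable _ _)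
      (hg.stronglyMeasurableAtFilter _ _) hg.continuousAt
  have hP : ∀ x, HasDerivAt P (p x) x := fun x =>
    intervalIntegral.integral_hasDerivAt_right (hp.intervalIntegrable _ _)
      (hp.stronglyMeasurableAtFilter _ _) hp.continuousAt
  -- pointwise continuity in the second variable
  have hFt : ∀ s, Continuous fun t => f s t * u s t := fun s =>
    hF.comp (Continuous.prodMk_right s)
  have hft : ∀ s, Continuous fun t => f s t := fun s =>
    hf_cont.comp (Continuous.prodMk_right s)
  -- the key bound `u x t ≤ A + v x` for `x ∈ [x₀, X]`, `t ∈ [y₀, Y]`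
  have hub : ∀ x ∈ Set.Icc x₀ X, ∀ t ∈ Set.Icc y₀ Y, u x t ≤ A + v x := by
    intro x hx t ht
    have h1 : u x t ≤ a x t + ∫ s in x₀..x, ∫ t' in y₀..t, f s t' * u s t' :=
      hineq x hx.1 t ht.1
    have h2 : a x t ≤ A := le_trans (ha_mono2 x t Y hx.1 ht.1 ht.2)
      (ha_mono1 x X Y hx.1 hx.2 hY)
    have h3 : (∫ s in x₀..x, ∫ t' in y₀..t, f s t' * u s t') ≤ v x := by
      apply intervalIntegral.integral_mono_on hx.1 _ (hg.intervalIntegrable _ _)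
      · intro s hs
        apply intervalIntegral.integral_mono_interval le_rfl ht.1 ht.2
        · filter_upwards [MeasureTheory.ae_restrict_mem measurableSet_Ioc] with t' ht'
          exact mul_nonneg (hf_nonneg s hs.1 t' (le_of_lt ht'.1))
            (hu_nonneg s hs.1 t' (le_of_lt ht'.1))
        · exact (hFt s).intervalIntegrable _ _
      · exact (intervalIntegral.continuous_parametric_intervalIntegral_of_continuous'
          (f := fun s t' => f s t' * u s t') hF y₀ t).intervalIntegrable _ _
    calc u x t ≤ a x t + ∫ s in x₀..x, ∫ t' in y₀..t, f s t' * u s t' := h1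
      _ ≤ A + v x := add_le_add h2 h3
  -- hence `g x ≤ (A + v x) * p x` on `[x₀, X]`
  have hkey : ∀ x ∈ Set.Icc x₀ X, g x ≤ (A + v x) * p x := by
    intro x hx
    have : g x ≤ ∫ t in y₀..Y, f x t * (A + v x) := by
      apply intervalIntegral.integral_mono_on hY ((hFt x).intervalIntegrable _ _)
        (((hft x).mul continuous_const).intervalIntegrable _ _)
      intro t ht
      exact mul_le_mul_of_nonneg_left (hub x hx t ht) (hf_nonneg x hx.1 t ht.1)
    rw [intervalIntegral.integral_mul_const] at this
    linarith [this]
  set r : ℝ → ℝ := fun x => (A + v x) * Real.exp (-(P x)) with hrdef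
  have hr : ∀ x, HasDerivAt r
      (g x * Real.exp (-(P x)) + (A + v x) * (Real.exp (-(P x)) * -(p x))) x := by
    intro x
    exact ((hv x).const_add A).mul (((hP x).neg).exp)
  have hrc : Continuous r := by
    rw [continuous_iff_continuousAt]; exact fun x => (hr x).continuousAt
  have hanti : AntitoneOn r (Set.Icc x₀ X) := by
    apply antitoneOn_of_deriv_nonpos (convex_Icc x₀ X) hrc.continuousOn
    · intro x _
      exact (hr x).differentiableAt.differentiableWithinAt
    · intro x hx
      rw [interior_Icc] at hx
      rw [(hr x).deriv]
      have hx' : x ∈ Set.Icc x₀ X := ⟨le_of_lt hx.1, le_of_lt hx.2⟩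
      have h1 : g x ≤ (A + v x) * p x := hkey x hx'
      have h2 : (0:ℝ) < Real.exp (-(P x)) := Real.exp_pos _
      nlinarith [h2]
  have hrX : r X ≤ r x₀ := hanti (Set.left_mem_Icc.2 hX) (Set.right_mem_Icc.2 hX) hX
  have hv0 : v x₀ = 0 := intervalIntegral.integral_same
  have hP0 : P x₀ = 0 := intervalIntegral.integral_same
  have hrx0 : r x₀ = A := by simp [hrdef, hv0, hP0]
  rw [hrx0] at hrX
  -- conclude
  have hfinal : A + v X ≤ A * Real.exp (P X) := by
    have h2 : (0:ℝ) < Real.exp (P X) := Real.exp_pos _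
    have := mul_le_mul_of_nonneg_right hrX (le_of_lt h2)
    rwa [hrdef, mul_assoc, ← Real.exp_add, neg_add_cancel, Real.exp_zero, mul_one] at this
  calc u X Y ≤ a X Y + ∫ s in x₀..X, ∫ t in y₀..Y, f s t * u s t := hineq X hX Y hY
    _ = A + v X := rfl
    _ ≤ A * Real.exp (P X) := hfinal
    _ = a X Y * Real.exp (∫ s in x₀..X, ∫ t in y₀..Y, f s t) := rfl
end

section
/- Let u, a, f : ℕ × ℕ → ℝ be nonnegative functions with a nondecreasing in each of its two variables. If for all (x,y) ∈ ℕ × ℕ one has u(x,y) ≤ a(x,y) + Σ_{s=0}^{x-1} Σ_{t=0}^{y-1} f(s,t) u(s,t), then for all (x,y) ∈ ℕ × ℕ one has u(x,y) ≤ a(x,y) · ∏_{s=0}^{x-1} (1 + Σ_{t=0}^{y-1} f(s,t)). -/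
/-- Discrete (𝕋 = ℤ, restricted to ℕ with base point 0) case of the
two-variable Gronwall-type lemma:
if `u(x,y) ≤ a(x,y) + Σ_{s<x} Σ_{t<y} f(s,t) u(s,t)` for all `x y : ℕ`,
with `u, a, f` nonnegative and `a` nondecreasing in each variable, then
`u(x,y) ≤ a(x,y) · ∏_{s<x} (1 + Σ_{t<y} f(s,t))`. -/
theorem stmt_1 (u a f : ℕ → ℕ → ℝ)
    (hu_nonneg : ∀ x y, 0 ≤ u x y)
    (ha_nonneg : ∀ x y, 0 ≤ a x y)
    (hf_nonneg : ∀ x y, 0 ≤ f x y)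
    (ha_mono1 : ∀ x₁ x₂ y, x₁ ≤ x₂ → a x₁ y ≤ a x₂ y)
    (ha_mono2 : ∀ x y₁ y₂, y₁ ≤ y₂ → a x y₁ ≤ a x y₂)
    (hineq : ∀ x y, u x y ≤ a x y +
      ∑ s ∈ Finset.range x, ∑ t ∈ Finset.range y, f s t * u s t) :
    ∀ x y, u x y ≤ a x y *
      ∏ s ∈ Finset.range x, (1 + ∑ t ∈ Finset.range y, f s t) := by
  intro X Y
  set g : ℕ → ℝ := fun s => ∑ t ∈ Finset.range Y, f s t with hg
  set A := a X Y with hA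
  set z : ℕ → ℝ := fun x => ∑ s ∈ Finset.range x, ∑ t ∈ Finset.range Y, f s t * u s t with hz
  have hznn : ∀ x, 0 ≤ z x := fun x =>
    Finset.sum_nonneg fun s _ => Finset.sum_nonneg fun t _ =>
      mul_nonneg (hf_nonneg s t) (hu_nonneg s t)
  have hgnn : ∀ s, 0 ≤ g s := fun s => Finset.sum_nonneg fun t _ => hf_nonneg s t
  have key : ∀ x, x ≤ X → A + z x ≤ A * ∏ s ∈ Finset.range x, (1 + g s) := by
    intro x
    induction x with
    | zero => intro _; simp [hz]
    | succ x ih =>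
      intro hxX
      have hx : x ≤ X := Nat.le_of_succ_le hxX
      have ihx := ih hx
      have hub : ∀ t < Y, u x t ≤ A + z x := by
        intro t ht
        have h1 := hineq x t
        have h2 : a x t ≤ A := le_trans (ha_mono1 x X t hx) (ha_mono2 X t Y (le_of_lt ht))
        have h3 : ∑ s ∈ Finset.range x, ∑ t' ∈ Finset.range t, f s t' * u s t' ≤ z x := by
          apply Finset.sum_le_sum
          intro s _
          apply Finset.sum_le_sum_of_subset_of_nonneg
          · exact Finset.range_subset_range.mpr (le_of_lt ht)
          · intro i _ _; exact mul_nonneg (hf_nonneg s i) (hu_nonneg s i)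
        linarith
      have hstep : z (x+1) ≤ z x + g x * (A + z x) := by
        have hzsucc : z (x+1) = z x + ∑ t ∈ Finset.range Y, f x t * u x t := by
          simp [hz, Finset.sum_range_succ]
        rw [hzsucc]
        have hle : ∑ t ∈ Finset.range Y, f x t * u x t
            ≤ ∑ t ∈ Finset.range Y, f x t * (A + z x) := by
          apply Finset.sum_le_sum
          intro t ht
          exact mul_le_mul_of_nonneg_left (hub t (Finset.mem_range.mp ht)) (hf_nonneg x t)
        rw [← Finset.sum_mul] at hle
        linarith
      have h4 : A + z (x+1) ≤ (A + z x) * (1 + g x) := by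
        have : (A + z x) * (1 + g x) = A + z x + g x * (A + z x) := by ring
        linarith
      calc A + z (x+1) ≤ (A + z x) * (1 + g x) := h4
        _ ≤ (A * ∏ s ∈ Finset.range x, (1 + g s)) * (1 + g x) := by
            apply mul_le_mul_of_nonneg_right ihx
            linarith [hgnn x]
        _ = A * ∏ s ∈ Finset.range (x+1), (1 + g s) := by
            rw [Finset.prod_range_succ]; ring
  have hk := key X le_rfl
  have h := hineq X Y
  calc u X Y ≤ A + z X := by simpa [hz, hA] using h
    _ ≤ _ := hk
end

section
/- Let x₀, y₀, a, b be real numbers with a ≤ b, and let H = [x₀,∞) × [y₀,∞) × [a,b]. Let u, p₁, p₂, f : ℝ³ → ℝ be continuous functions that are nonnegative on H. Suppose that for all (x,y,z) ∈ H one has u(x,y,z) ≤ p₁(x,y,z) + p₂(x,y,z) · ∫_{x₀}^{x} ∫_{y₀}^{y} ∫_{a}^{b} f(s,τ,q) u(s,τ,q) dq dτ ds. Then for all (x,y,z) ∈ H one has u(x,y,z) ≤ p₁(x,y,z) + p₂(x,y,z) · C(x,y) · exp(∫_{x₀}^{x} Q(s,y) ds), where Q(s,y) = ∫_{y₀}^{y}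 ∫_{a}^{b} f(s,τ,q) p₂(s,τ,q) dq dτ and C(x,y) = ∫_{x₀}^{x} ∫_{y₀}^{y} ∫_{a}^{b} f(s,τ,q) p₁(s,τ,q) dq dτ ds. -/
open MeasureTheory Set intervalIntegral

/-- Continuous (𝕋₁ = 𝕋₂ = ℝ) case of the paper's main Theorem 2.1:
a Gronwall-type estimate for an integral inequality in three variables on
`H = [x₀,∞) × [y₀,∞) × [a,b]`. -/
theorem stmt_2 (x₀ y₀ a b : ℝ) (hab : a ≤ b) (u p₁ p₂ f : ℝ → ℝ → ℝ → ℝ)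
    (hu_cont : Continuous (fun p : ℝ × ℝ × ℝ => u p.1 p.2.1 p.2.2))
    (hp₁_cont : Continuous (fun p : ℝ × ℝ × ℝ => p₁ p.1 p.2.1 p.2.2))
    (hp₂_cont : Continuous (fun p : ℝ × ℝ × ℝ => p₂ p.1 p.2.1 p.2.2))
    (hf_cont : Continuous (fun p : ℝ × ℝ × ℝ => f p.1 p.2.1 p.2.2))
    (hu_nonneg : ∀ x, x₀ ≤ x → ∀ y, y₀ ≤ y → ∀ z ∈ Set.Icc a b, 0 ≤ u x y z)
    (hp₁_nonneg : ∀ x, x₀ ≤ x → ∀ y, y₀ ≤ y → ∀ z ∈ Set.Icc a b, 0 ≤ p₁ x y z)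
    (hp₂_nonneg : ∀ x, x₀ ≤ x → ∀ y, y₀ ≤ y → ∀ z ∈ Set.Icc a b, 0 ≤ p₂ x y z)
    (hf_nonneg : ∀ x, x₀ ≤ x → ∀ y, y₀ ≤ y → ∀ z ∈ Set.Icc a b, 0 ≤ f x y z)
    (hineq : ∀ x, x₀ ≤ x → ∀ y, y₀ ≤ y → ∀ z ∈ Set.Icc a b,
      u x y z ≤ p₁ x y z + p₂ x y z *
        ∫ s in x₀..x, ∫ τ in y₀..y, ∫ q in a..b, f s τ q * u s τ q) :
    ∀ x, x₀ ≤ x → ∀ y, y₀ ≤ y → ∀ z ∈ Set.Icc a b,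
      u x y z ≤ p₁ x y z + p₂ x y z *
        (∫ s in x₀..x, ∫ τ in y₀..y, ∫ q in a..b, f s τ q * p₁ s τ q) *
        Real.exp (∫ s in x₀..x, ∫ τ in y₀..y, ∫ q in a..b,
          f s τ q * p₂ s τ q) := by
  intro x hx y hy z hz
  -- continuity of products, uncurried
  have hprod : ∀ (φ : ℝ → ℝ → ℝ → ℝ),
      Continuous (fun p : ℝ × ℝ × ℝ => φ p.1 p.2.1 p.2.2) →
      Continuous (fun w : (ℝ × ℝ) × ℝ => f w.1.1 w.1.2 w.2 * φ w.1.1 w.1.2 w.2) := by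
    intro φ hφ
    have hmap : Continuous fun w : (ℝ × ℝ) × ℝ => (w.1.1, w.1.2, w.2) := by fun_prop
    exact (hf_cont.comp hmap).mul (hφ.comp hmap)
  have hqcont : ∀ (φ : ℝ → ℝ → ℝ → ℝ),
      Continuous (fun p : ℝ × ℝ × ℝ => φ p.1 p.2.1 p.2.2) →
      ∀ s t, Continuous fun q => f s t q * φ s t q := by
    intro φ hφ s t
    exact (hprod φ hφ).comp (show Continuous fun q : ℝ => ((s, t), q) by fun_prop)
  -- inner integrals in q, as functions of (s,τ)
  set Fu : ℝ → ℝ → ℝ := fun s τ => ∫ q in a..b, f s τ q * u s τ q with hFu_def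
  set F1 : ℝ → ℝ → ℝ := fun s τ => ∫ q in a..b, f s τ q * p₁ s τ q with hF1_def
  set F2 : ℝ → ℝ → ℝ := fun s τ => ∫ q in a..b, f s τ q * p₂ s τ q with hF2_def
  have hFuc : Continuous fun p : ℝ × ℝ => Fu p.1 p.2 := by
    exact intervalIntegral.continuous_parametric_intervalIntegral_of_continuous'
      (f := fun (p : ℝ × ℝ) q => f p.1 p.2 q * u p.1 p.2 q) (hprod u hu_cont) a b
  have hF1c : Continuous fun p : ℝ × ℝ => F1 p.1 p.2 := by
    exact intervalIntegral.continuous_parametric_intervalIntegral_of_continuous'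
      (f := fun (p : ℝ × ℝ) q => f p.1 p.2 q * p₁ p.1 p.2 q) (hprod p₁ hp₁_cont) a b
  have hF2c : Continuous fun p : ℝ × ℝ => F2 p.1 p.2 := by
    exact intervalIntegral.continuous_parametric_intervalIntegral_of_continuous'
      (f := fun (p : ℝ × ℝ) q => f p.1 p.2 q * p₂ p.1 p.2 q) (hprod p₂ hp₂_cont) a b
  -- nonnegativity of the q-integrals on the region
  have hFu_nonneg : ∀ s, x₀ ≤ s → ∀ τ, y₀ ≤ τ → 0 ≤ Fu s τ := fun s hs τ hτ =>
    intervalIntegral.integral_nonneg hab fun q hq =>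
      mul_nonneg (hf_nonneg s hs τ hτ q hq) (hu_nonneg s hs τ hτ q hq)
  have hF1_nonneg : ∀ s, x₀ ≤ s → ∀ τ, y₀ ≤ τ → 0 ≤ F1 s τ := fun s hs τ hτ =>
    intervalIntegral.integral_nonneg hab fun q hq =>
      mul_nonneg (hf_nonneg s hs τ hτ q hq) (hp₁_nonneg s hs τ hτ q hq)
  have hF2_nonneg : ∀ s, x₀ ≤ s → ∀ τ, y₀ ≤ τ → 0 ≤ F2 s τ := fun s hs τ hτ =>
    intervalIntegral.integral_nonneg hab fun q hq =>
      mul_nonneg (hf_nonneg s hs τ hτ q hq) (hp₂_nonneg s hs τ hτ q hq)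
  -- τ-integrals up to the fixed y
  set g : ℝ → ℝ := fun s => ∫ τ in y₀..y, Fu s τ with hg_def
  set Qf : ℝ → ℝ := fun s => ∫ τ in y₀..y, F2 s τ with hQf_def
  set Cf : ℝ → ℝ := fun s => ∫ τ in y₀..y, F1 s τ with hCf_def
  have hgc : Continuous g :=
    intervalIntegral.continuous_parametric_intervalIntegral_of_continuous'
      (f := Fu) hFuc y₀ y
  have hQfc : Continuous Qf :=
    intervalIntegral.continuous_parametric_intervalIntegral_of_continuous'
      (f := F2) hF2c y₀ y
  have hCfc : Continuous Cf :=
    intervalIntegral.continuous_parametric_intervalIntegral_of_continuous'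
      (f := F1) hF1c y₀ y
  have hg_nonneg : ∀ s, x₀ ≤ s → 0 ≤ g s := fun s hs =>
    intervalIntegral.integral_nonneg hy fun τ hτ => hFu_nonneg s hs τ hτ.1
  have hQf_nonneg : ∀ s, x₀ ≤ s → 0 ≤ Qf s := fun s hs =>
    intervalIntegral.integral_nonneg hy fun τ hτ => hF2_nonneg s hs τ hτ.1
  have hCf_nonneg : ∀ s, x₀ ≤ s → 0 ≤ Cf s := fun s hs =>
    intervalIntegral.integral_nonneg hy fun τ hτ => hF1_nonneg s hs τ hτ.1
  -- primitives
  set V : ℝ → ℝ := fun t => ∫ s in x₀..t, g s with hV_def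
  set R : ℝ → ℝ := fun t => ∫ s in x₀..t, Qf s with hR_def
  set Cc : ℝ → ℝ := fun t => ∫ s in x₀..t, Cf s with hCc_def
  have hR_nonneg : ∀ t, x₀ ≤ t → 0 ≤ R t := fun t ht =>
    intervalIntegral.integral_nonneg ht fun s hs => hQf_nonneg s hs.1
  have hFuτc : ∀ s, Continuous fun τ => Fu s τ := fun s =>
    hFuc.comp (show Continuous fun τ : ℝ => (s, τ) by fun_prop)
  -- Claim A: pointwise bound by V
  have claimA : ∀ s, x₀ ≤ s → ∀ τ, y₀ ≤ τ → τ ≤ y → ∀ q ∈ Set.Icc a b,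
      u s τ q ≤ p₁ s τ q + p₂ s τ q * V s := by
    intro s hs τ hτ hτy q hq
    have h0 := hineq s hs τ hτ q hq
    have hVle : (∫ s' in x₀..s, ∫ τ' in y₀..τ, ∫ q' in a..b, f s' τ' q' * u s' τ' q') ≤ V s := by
      have hcτ : Continuous fun s' => ∫ τ' in y₀..τ, Fu s' τ' :=
        intervalIntegral.continuous_parametric_intervalIntegral_of_continuous'
          (f := Fu) hFuc y₀ τ
      refine intervalIntegral.integral_mono_on hs (hcτ.intervalIntegrable _ _)
        (hgc.intervalIntegrable _ _) ?_
      intro s' hs'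
      have int1 : IntervalIntegrable (fun τ' => Fu s' τ') volume y₀ τ :=
        (hFuτc s').intervalIntegrable _ _
      have int2 : IntervalIntegrable (fun τ' => Fu s' τ') volume τ y :=
        (hFuτc s').intervalIntegrable _ _
      have hsplit := intervalIntegral.integral_add_adjacent_intervals int1 int2
      have hpos : 0 ≤ ∫ τ' in τ..y, Fu s' τ' :=
        intervalIntegral.integral_nonneg hτy fun τ' hτ' =>
          hFu_nonneg s' hs'.1 τ' (hτ.trans hτ'.1)
      have : (∫ τ' in y₀..τ, Fu s' τ') + (∫ τ' in τ..y, Fu s' τ') = g s' := hsplit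
      linarith
    have hp2 := hp₂_nonneg s hs τ hτ q hq
    nlinarith [mul_le_mul_of_nonneg_left hVle hp2]
  -- Claim B: differential inequality for V
  have claimB : ∀ t, x₀ ≤ t → g t ≤ Cf t + Qf t * V t := by
    intro t ht
    have key : ∀ τ ∈ Set.Icc y₀ y, Fu t τ ≤ F1 t τ + F2 t τ * V t := by
      intro τ hτ
      have intFu : IntervalIntegrable (fun q => f t τ q * u t τ q) volume a b :=
        (hqcont u hu_cont t τ).intervalIntegrable _ _
      have int1 : IntervalIntegrable (fun q => f t τ q * p₁ t τ q) volume a b :=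
        (hqcont p₁ hp₁_cont t τ).intervalIntegrable _ _
      have int2 : IntervalIntegrable (fun q => f t τ q * p₂ t τ q * V t) volume a b :=
        (((hqcont p₂ hp₂_cont t τ)).mul continuous_const).intervalIntegrable _ _
      have step : Fu t τ ≤ ∫ q in a..b,
          (f t τ q * p₁ t τ q + f t τ q * p₂ t τ q * V t) := by
        refine intervalIntegral.integral_mono_on hab intFu (int1.add int2) ?_
        intro q hq
        have hA := claimA t ht τ hτ.1 hτ.2 q hq
        have hfnn := hf_nonneg t ht τ hτ.1 q hq
        nlinarith [mul_le_mul_of_nonneg_left hA hfnn]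
      rw [intervalIntegral.integral_add int1 int2, intervalIntegral.integral_mul_const] at step
      exact step
    have intFuτ : IntervalIntegrable (fun τ => Fu t τ) volume y₀ y :=
      (hFuτc t).intervalIntegrable _ _
    have hF1τc : Continuous fun τ => F1 t τ :=
      hF1c.comp (show Continuous fun τ : ℝ => (t, τ) by fun_prop)
    have hF2τc : Continuous fun τ => F2 t τ :=
      hF2c.comp (show Continuous fun τ : ℝ => (t, τ) by fun_prop)
    have intRHS : IntervalIntegrable (fun τ => F1 t τ + F2 t τ * V t) volume y₀ y :=
      ((hF1τc.add (hF2τc.mul continuous_const))).intervalIntegrable _ _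
    have hmono : g t ≤ ∫ τ in y₀..y, (F1 t τ + F2 t τ * V t) :=
      intervalIntegral.integral_mono_on hy intFuτ intRHS key
    rw [intervalIntegral.integral_add (hF1τc.intervalIntegrable _ _)
      (show IntervalIntegrable (fun τ => F2 t τ * V t) volume y₀ y from (hF2τc.mul continuous_const).intervalIntegrable _ _),
      intervalIntegral.integral_mul_const] at hmono
    exact hmono
  -- derivatives of the primitives
  have hVd : ∀ t, HasDerivAt V (g t) t := fun t => (hgc.integral_hasStrictDerivAt x₀ t).hasDerivAt
  have hRd : ∀ t, HasDerivAt R (Qf t) t := fun t => (hQfc.integral_hasStrictDerivAt x₀ t).hasDerivAt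
  have hCd : ∀ t, HasDerivAt Cc (Cf t) t := fun t => (hCfc.integral_hasStrictDerivAt x₀ t).hasDerivAt
  -- Gronwall via the integrating factor exp(-R)
  set W : ℝ → ℝ := fun t => V t * Real.exp (-(R t)) with hW_def
  have hWd : ∀ t, HasDerivAt W ((g t - Qf t * V t) * Real.exp (-(R t))) t := by
    intro t
    have h2 : HasDerivAt (fun t => Real.exp (-(R t))) (Real.exp (-(R t)) * (-(Qf t))) t :=
      ((hRd t).neg).exp
    have h3 : HasDerivAt (fun t => V t * Real.exp (-(R t))) (g t * Real.exp (-(R t)) + V t * (Real.exp (-(R t)) * (-(Qf t)))) t := (hVd t).mul h2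
    convert h3 using 1
    ring
  set D : ℝ → ℝ := fun t => Cc t - W t with hD_def
  have hDd : ∀ t, HasDerivAt D (Cf t - (g t - Qf t * V t) * Real.exp (-(R t))) t :=
    fun t => (hCd t).sub (hWd t)
  have hDmono : MonotoneOn D (Set.Ici x₀) := by
    refine monotoneOn_of_deriv_nonneg (convex_Ici x₀)
      (fun t _ => ((hDd t).continuousAt).continuousWithinAt)
      (fun t _ => ((hDd t).differentiableAt).differentiableWithinAt) ?_
    intro t ht
    rw [interior_Ici] at ht
    have ht' : x₀ ≤ t := le_of_lt ht
    rw [(hDd t).deriv]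
    have hB := claimB t ht'
    have he1 : Real.exp (-(R t)) ≤ 1 := Real.exp_le_one_iff.2 (neg_nonpos.2 (hR_nonneg t ht'))
    have he0 : (0:ℝ) < Real.exp (-(R t)) := Real.exp_pos _
    have hCfnn := hCf_nonneg t ht'
    nlinarith [mul_le_mul_of_nonneg_right (show g t - Qf t * V t ≤ Cf t by linarith) he0.le]
  have hD0 : D x₀ = 0 := by
    simp [hD_def, hW_def, hV_def, hCc_def, intervalIntegral.integral_same]
  have hDx : 0 ≤ D x := by
    have := hDmono (Set.self_mem_Ici) (Set.mem_Ici.2 hx) hx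
    linarith [hD0 ▸ this]
  have hVx : V x ≤ Cc x * Real.exp (R x) := by
    have hWx : W x ≤ Cc x := by
      have : Cc x - W x = D x := rfl
      linarith
    have hid : V x = W x * Real.exp (R x) := by
      simp only [hW_def]
      rw [mul_assoc, ← Real.exp_add]
      simp
    rw [hid]
    exact mul_le_mul_of_nonneg_right hWx (Real.exp_pos _).le
  have hA := claimA x hx y hy le_rfl z hz
  have hp2 := hp₂_nonneg x hx y hy z hz
  have hfinal : u x y z ≤ p₁ x y z + p₂ x y z * Cc x * Real.exp (R x) := by
    nlinarith [mul_le_mul_of_nonneg_left hVx hp2]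
  exact hfinal
end

section
/- Let a, b be natural numbers with a ≤ b, and let u, p₁, p₂, f : ℕ × ℕ × ℕ → ℝ be nonnegative functions. Suppose that for all x, y ∈ ℕ and all z with a ≤ z ≤ b one has u(x,y,z) ≤ p₁(x,y,z) + p₂(x,y,z) · Σ_{s=0}^{x-1} Σ_{τ=0}^{y-1} Σ_{q=a}^{b} f(s,τ,q) u(s,τ,q). Then for all x, y ∈ ℕ and all z with a ≤ z ≤ b one has u(x,y,z) ≤ p₁(x,y,z) + p₂(x,y,z) · C(x,y) · ∏_{s=0}^{x-1} (1 + Q(s,y)), where Q(s,y) = Σ_{τ=0}^{y-1} Σ_{q=a}^{b} f(s,τ,q) p₂(s,τ,q) and C(x,y) = Σ_{s=0}^{x-1} Σ_{τ=0}^{y-1} Σ_{q=a}^{b} f(s,τ,q) p₁(s,τ,q). -/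
/-- Discrete (𝕋₁ = 𝕋₂ = ℤ, restricted to ℕ with base points 0) case of the
paper's main Theorem 2.1: a Gronwall-type estimate for a sum inequality in
three variables, the third variable ranging over the integers `a, …, b`. -/
theorem stmt_3 (a b : ℕ) (hab : a ≤ b) (u p₁ p₂ f : ℕ → ℕ → ℕ → ℝ)
    (hu_nonneg : ∀ x y z, 0 ≤ u x y z)
    (hp₁_nonneg : ∀ x y z, 0 ≤ p₁ x y z)
    (hp₂_nonneg : ∀ x y z, 0 ≤ p₂ x y z)
    (hf_nonneg : ∀ x y z, 0 ≤ f x y z)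
    (hineq : ∀ x y z, a ≤ z → z ≤ b →
      u x y z ≤ p₁ x y z + p₂ x y z *
        ∑ s ∈ Finset.range x, ∑ τ ∈ Finset.range y, ∑ q ∈ Finset.Icc a b,
          f s τ q * u s τ q) :
    ∀ x y z, a ≤ z → z ≤ b →
      u x y z ≤ p₁ x y z + p₂ x y z *
        (∑ s ∈ Finset.range x, ∑ τ ∈ Finset.range y, ∑ q ∈ Finset.Icc a b,
          f s τ q * p₁ s τ q) *
        ∏ s ∈ Finset.range x,
          (1 + ∑ τ ∈ Finset.range y, ∑ q ∈ Finset.Icc a b,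
            f s τ q * p₂ s τ q) := by
  set V : ℕ → ℕ → ℝ := fun x y =>
    ∑ s ∈ Finset.range x, ∑ τ ∈ Finset.range y, ∑ q ∈ Finset.Icc a b,
      f s τ q * u s τ q with hVdef
  set C : ℕ → ℕ → ℝ := fun x y =>
    ∑ s ∈ Finset.range x, ∑ τ ∈ Finset.range y, ∑ q ∈ Finset.Icc a b,
      f s τ q * p₁ s τ q with hCdef
  set Q : ℕ → ℕ → ℝ := fun s y =>
    ∑ τ ∈ Finset.range y, ∑ q ∈ Finset.Icc a b, f s τ q * p₂ s τ q with hQdef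
  have hQ_nonneg : ∀ s y, 0 ≤ Q s y := fun s y =>
    Finset.sum_nonneg fun τ _ => Finset.sum_nonneg fun q _ =>
      mul_nonneg (hf_nonneg _ _ _) (hp₂_nonneg _ _ _)
  have hC_nonneg : ∀ x y, 0 ≤ C x y := fun x y =>
    Finset.sum_nonneg fun s _ => Finset.sum_nonneg fun τ _ =>
      Finset.sum_nonneg fun q _ =>
        mul_nonneg (hf_nonneg _ _ _) (hp₁_nonneg _ _ _)
  have hP_one : ∀ x y, (1 : ℝ) ≤ ∏ s ∈ Finset.range x, (1 + Q s y) := by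
    intro x y
    calc (1:ℝ) = ∏ _s ∈ Finset.range x, 1 := by simp
      _ ≤ ∏ s ∈ Finset.range x, (1 + Q s y) :=
        Finset.prod_le_prod (fun s _ => by norm_num)
          (fun s _ => by linarith [hQ_nonneg s y])
  have hVmono : ∀ x y y', y ≤ y' → V x y ≤ V x y' := by
    intro x y y' hy
    apply Finset.sum_le_sum
    intro s _
    apply Finset.sum_le_sum_of_subset_of_nonneg (Finset.range_subset_range.2 hy)
    intro τ _ _
    exact Finset.sum_nonneg fun q _ =>
      mul_nonneg (hf_nonneg _ _ _) (hu_nonneg _ _ _)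
  have key : ∀ y x, V x y ≤ C x y * ∏ s ∈ Finset.range x, (1 + Q s y) := by
    intro y x
    induction x with
    | zero => simp [hVdef, hCdef]
    | succ x ih =>
      have hstep : V (x + 1) y ≤ V x y +
          ((∑ τ ∈ Finset.range y, ∑ q ∈ Finset.Icc a b, f x τ q * p₁ x τ q)
            + Q x y * V x y) := by
        have : V (x + 1) y = V x y +
            ∑ τ ∈ Finset.range y, ∑ q ∈ Finset.Icc a b, f x τ q * u x τ q := by
          simp [hVdef, Finset.sum_range_succ]
        rw [this]
        gcongr V x y + ?_
        calc ∑ τ ∈ Finset.range y, ∑ q ∈ Finset.Icc a b, f x τ q * u x τ q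
            ≤ ∑ τ ∈ Finset.range y, ∑ q ∈ Finset.Icc a b,
                f x τ q * (p₁ x τ q + p₂ x τ q * V x y) := by
              apply Finset.sum_le_sum; intro τ hτ
              apply Finset.sum_le_sum; intro q hq
              have hq' := Finset.mem_Icc.1 hq
              have h1 : u x τ q ≤ p₁ x τ q + p₂ x τ q * V x τ :=
                hineq x τ q hq'.1 hq'.2
              have h2 : V x τ ≤ V x y :=
                hVmono x τ y (Nat.le_of_lt (Finset.mem_range.1 hτ))
              have : u x τ q ≤ p₁ x τ q + p₂ x τ q * V x y := by
                calc u x τ q ≤ p₁ x τ q + p₂ x τ q * V x τ := h1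
                  _ ≤ p₁ x τ q + p₂ x τ q * V x y := by
                    gcongr; exact hp₂_nonneg _ _ _
              exact mul_le_mul_of_nonneg_left this (hf_nonneg _ _ _)
          _ = (∑ τ ∈ Finset.range y, ∑ q ∈ Finset.Icc a b, f x τ q * p₁ x τ q)
              + Q x y * V x y := by
              simp only [hQdef, Finset.sum_mul, ← Finset.sum_add_distrib]
              congr 1; ext τ; congr 1; ext q; ring
      have hc_nonneg : 0 ≤ ∑ τ ∈ Finset.range y, ∑ q ∈ Finset.Icc a b,
          f x τ q * p₁ x τ q :=
        Finset.sum_nonneg fun τ _ => Finset.sum_nonneg fun q _ =>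
          mul_nonneg (hf_nonneg _ _ _) (hp₁_nonneg _ _ _)
      have hCsucc : C (x + 1) y = C x y +
          ∑ τ ∈ Finset.range y, ∑ q ∈ Finset.Icc a b, f x τ q * p₁ x τ q := by
        simp [hCdef, Finset.sum_range_succ]
      have hPsucc : ∏ s ∈ Finset.range (x + 1), (1 + Q s y)
          = (∏ s ∈ Finset.range x, (1 + Q s y)) * (1 + Q x y) :=
        Finset.prod_range_succ _ _
      have hP := hP_one x y
      have hQx := hQ_nonneg x y
      have hV_nonneg : 0 ≤ V x y :=
        Finset.sum_nonneg fun s _ => Finset.sum_nonneg fun τ _ =>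
          Finset.sum_nonneg fun q _ =>
            mul_nonneg (hf_nonneg _ _ _) (hu_nonneg _ _ _)
      set c := ∑ τ ∈ Finset.range y, ∑ q ∈ Finset.Icc a b, f x τ q * p₁ x τ q
      set P := ∏ s ∈ Finset.range x, (1 + Q s y)
      have h1 : V (x+1) y ≤ (1 + Q x y) * V x y + c := by
        calc V (x+1) y ≤ V x y + (c + Q x y * V x y) := hstep
          _ = (1 + Q x y) * V x y + c := by ring
      calc V (x+1) y ≤ (1 + Q x y) * V x y + c := h1
        _ ≤ (1 + Q x y) * (C x y * P) + c :=
            add_le_add_left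
              (mul_le_mul_of_nonneg_left ih (by linarith : (0:ℝ) ≤ 1 + Q x y)) c
        _ ≤ (1 + Q x y) * (C x y * P) + c * (P * (1 + Q x y)) := by
            have h2 : (1:ℝ) ≤ P * (1 + Q x y) := by nlinarith
            nlinarith [mul_le_mul_of_nonneg_left h2 hc_nonneg]
        _ = (C x y + c) * (P * (1 + Q x y)) := by ring
        _ = C (x+1) y * ∏ s ∈ Finset.range (x+1), (1 + Q s y) := by
            rw [hCsucc, hPsucc]
  intro x y z hza hzb
  calc u x y z ≤ p₁ x y z + p₂ x y z * V x y := hineq x y z hza hzb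
    _ ≤ p₁ x y z + p₂ x y z *
        (C x y * ∏ s ∈ Finset.range x, (1 + Q s y)) := by
        gcongr
        · exact hp₂_nonneg _ _ _
        · exact key y x
    _ = p₁ x y z + p₂ x y z * C x y * ∏ s ∈ Finset.range x, (1 + Q s y) := by
        ring
end

section
/- Let x₀, y₀, a, b be real numbers with a ≤ b, and let H = [x₀,∞) × [y₀,∞) × [a,b]. Let g : ℝ³ → ℝ and F : ℝ³ × ℝ³ × ℝ → ℝ be continuous, and let r, f : ℝ³ → ℝ be continuous and nonnegative on H, with |F(x,y,z,s,t,q,w)| ≤ r(x,y,z) · f(s,t,q) · |w| for all (x,y,z), (s,t,q) ∈ H and all w ∈ ℝ. Let u : ℝ³ → ℝ be continuous and satisfy, for all (x,y,z) ∈ H, the integral equation u(x,y,z) = g(x,y,z) + ∫_{x₀}^{x} ∫_{y₀}^{y} ∫_{a}^{b} F(x,y,z,s,t,q,u(s,t,q)) dq dt ds. Then for all (x,y,z) ∈ H one has |u(x,y,z)| ≤ |g(x,y,z)| + r(x,y,z) · C₂(x,y) · exp(∫_{x₀}^{x} Q₂(s,y) ds), where C₂(x,y) = ∫_{x₀}^{x}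 ∫_{y₀}^{y} ∫_{a}^{b} f(s,t,q) |g(s,t,q)| dq dt ds and Q₂(s,y) = ∫_{y₀}^{y} ∫_{a}^{b} f(s,t,q) r(s,t,q) dq dt. -/
set_option maxHeartbeats 1000000

open intervalIntegral Set

/-- parametric continuity of the inner integral in two parameters -/
lemma stmt4_cont2 {k : ℝ → ℝ → ℝ → ℝ}
    (hk : Continuous fun p : ℝ × ℝ × ℝ => k p.1 p.2.1 p.2.2) (a b : ℝ) :
    Continuous fun st : ℝ × ℝ => ∫ q in a..b, k st.1 st.2 q := by
  have h1 : Continuous (Function.uncurry fun (st : ℝ × ℝ) q => k st.1 st.2 q) :=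
    hk.comp (by fun_prop : Continuous fun p : (ℝ × ℝ) × ℝ => (p.1.1, p.1.2, p.2))
  exact intervalIntegral.continuous_parametric_intervalIntegral_of_continuous' h1 a b

/-- parametric continuity of the double integral in one parameter -/
lemma stmt4_cont3 {k : ℝ → ℝ → ℝ → ℝ}
    (hk : Continuous fun p : ℝ × ℝ × ℝ => k p.1 p.2.1 p.2.2) (y₀ y a b : ℝ) :
    Continuous fun s => ∫ t in y₀..y, ∫ q in a..b, k s t q := by
  have h3 : Continuous (Function.uncurry fun s t => ∫ q in a..b, k s t q) :=
    stmt4_cont2 hk a b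
  exact intervalIntegral.continuous_parametric_intervalIntegral_of_continuous' h3 y₀ y

lemma stmt4_slice_q {k : ℝ → ℝ → ℝ → ℝ}
    (hk : Continuous fun p : ℝ × ℝ × ℝ => k p.1 p.2.1 p.2.2) (s t : ℝ) :
    Continuous fun q => k s t q :=
  hk.comp (continuous_const.prodMk (continuous_const.prodMk continuous_id))

lemma stmt4_slice_t {k : ℝ → ℝ → ℝ → ℝ}
    (hk : Continuous fun p : ℝ × ℝ × ℝ => k p.1 p.2.1 p.2.2) (s a b : ℝ) :
    Continuous fun t => ∫ q in a..b, k s t q :=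
  (stmt4_cont2 hk a b).comp (continuous_const.prodMk continuous_id)

/-- Continuous (𝕋 = ℝ) case of the paper's Theorem 3.1: an a priori bound on
solutions of a Volterra-type integral equation in three variables on
`H = [x₀,∞) × [y₀,∞) × [a,b]`. -/
theorem stmt_4 (x₀ y₀ a b : ℝ) (hab : a ≤ b)
    (g : ℝ → ℝ → ℝ → ℝ) (F : ℝ → ℝ → ℝ → ℝ → ℝ → ℝ → ℝ → ℝ)
    (r f : ℝ → ℝ → ℝ → ℝ) (u : ℝ → ℝ → ℝ → ℝ)
    (hg_cont : Continuous (fun p : ℝ × ℝ × ℝ => g p.1 p.2.1 p.2.2))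
    (hF_cont : Continuous (fun p : (ℝ × ℝ × ℝ) × (ℝ × ℝ × ℝ) × ℝ =>
      F p.1.1 p.1.2.1 p.1.2.2 p.2.1.1 p.2.1.2.1 p.2.1.2.2 p.2.2))
    (hr_cont : Continuous (fun p : ℝ × ℝ × ℝ => r p.1 p.2.1 p.2.2))
    (hf_cont : Continuous (fun p : ℝ × ℝ × ℝ => f p.1 p.2.1 p.2.2))
    (hu_cont : Continuous (fun p : ℝ × ℝ × ℝ => u p.1 p.2.1 p.2.2))
    (hr_nonneg : ∀ x, x₀ ≤ x → ∀ y, y₀ ≤ y → ∀ z ∈ Set.Icc a b, 0 ≤ r x y z)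
    (hf_nonneg : ∀ x, x₀ ≤ x → ∀ y, y₀ ≤ y → ∀ z ∈ Set.Icc a b, 0 ≤ f x y z)
    (hF_bound : ∀ x, x₀ ≤ x → ∀ y, y₀ ≤ y → ∀ z ∈ Set.Icc a b,
      ∀ s, x₀ ≤ s → ∀ t, y₀ ≤ t → ∀ q ∈ Set.Icc a b, ∀ w : ℝ,
        |F x y z s t q w| ≤ r x y z * f s t q * |w|)
    (heq : ∀ x, x₀ ≤ x → ∀ y, y₀ ≤ y → ∀ z ∈ Set.Icc a b,
      u x y z = g x y z +
        ∫ s in x₀..x, ∫ t in y₀..y, ∫ q in a..b, F x y z s t q (u s t q)) :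
    ∀ x, x₀ ≤ x → ∀ y, y₀ ≤ y → ∀ z ∈ Set.Icc a b,
      |u x y z| ≤ |g x y z| + r x y z *
        (∫ s in x₀..x, ∫ t in y₀..y, ∫ q in a..b, f s t q * |g s t q|) *
        Real.exp (∫ s in x₀..x, ∫ t in y₀..y, ∫ q in a..b,
          f s t q * r s t q) := by
  intro x hx y hy z hz
  -- combined continuous integrands
  have hfu : Continuous fun p : ℝ × ℝ × ℝ => f p.1 p.2.1 p.2.2 * |u p.1 p.2.1 p.2.2| :=
    hf_cont.mul hu_cont.abs
  have hfg : Continuous fun p : ℝ × ℝ × ℝ => f p.1 p.2.1 p.2.2 * |g p.1 p.2.1 p.2.2| :=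
    hf_cont.mul hg_cont.abs
  have hfr : Continuous fun p : ℝ × ℝ × ℝ => f p.1 p.2.1 p.2.2 * r p.1 p.2.1 p.2.2 :=
    hf_cont.mul hr_cont
  set ψ : ℝ → ℝ := fun s => ∫ t in y₀..y, ∫ q in a..b, f s t q * |u s t q| with hψdef
  set c : ℝ → ℝ := fun s => ∫ t in y₀..y, ∫ q in a..b, f s t q * |g s t q| with hcdef
  set Q : ℝ → ℝ := fun s => ∫ t in y₀..y, ∫ q in a..b, f s t q * r s t q with hQdef
  have hψc : Continuous ψ := stmt4_cont3 (k := fun a1 a2 a3 => f a1 a2 a3 * |u a1 a2 a3|) hfu y₀ y a b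
  have hcc : Continuous c := stmt4_cont3 (k := fun a1 a2 a3 => f a1 a2 a3 * |g a1 a2 a3|) hfg y₀ y a b
  have hQc : Continuous Q := stmt4_cont3 (k := fun a1 a2 a3 => f a1 a2 a3 * r a1 a2 a3) hfr y₀ y a b
  have hψ0 : ∀ s, x₀ ≤ s → 0 ≤ ψ s := by
    intro s hs
    refine intervalIntegral.integral_nonneg hy fun t ht => ?_
    exact intervalIntegral.integral_nonneg hab fun q hq =>
      mul_nonneg (hf_nonneg s hs t ht.1 q hq) (abs_nonneg _)
  have hc0 : ∀ s, x₀ ≤ s → 0 ≤ c s := by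
    intro s hs
    refine intervalIntegral.integral_nonneg hy fun t ht => ?_
    exact intervalIntegral.integral_nonneg hab fun q hq =>
      mul_nonneg (hf_nonneg s hs t ht.1 q hq) (abs_nonneg _)
  have hQ0 : ∀ s, x₀ ≤ s → 0 ≤ Q s := by
    intro s hs
    refine intervalIntegral.integral_nonneg hy fun t ht => ?_
    exact intervalIntegral.integral_nonneg hab fun q hq =>
      mul_nonneg (hf_nonneg s hs t ht.1 q hq) (hr_nonneg s hs t ht.1 q hq)
  -- key pointwise bound
  have key : ∀ s, x₀ ≤ s → ∀ t ∈ Set.Icc y₀ y, ∀ q ∈ Set.Icc a b,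
      |u s t q| ≤ |g s t q| + r s t q * ∫ s' in x₀..s, ψ s' := by
    intro s hs t ht q hq
    have hrstq : 0 ≤ r s t q := hr_nonneg s hs t ht.1 q hq
    have hFU : Continuous fun p : ℝ × ℝ × ℝ =>
        F s t q p.1 p.2.1 p.2.2 (u p.1 p.2.1 p.2.2) :=
      by
        have h : Continuous fun p : ℝ × ℝ × ℝ =>
            (((s, t, q) : ℝ × ℝ × ℝ), ((p, u p.1 p.2.1 p.2.2) : (ℝ × ℝ × ℝ) × ℝ)) :=
          continuous_const.prodMk (continuous_id.prodMk hu_cont)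
        exact hF_cont.comp h
    -- innermost level
    have hq_inner : ∀ s', x₀ ≤ s' → ∀ t', y₀ ≤ t' →
        |∫ q' in a..b, F s t q s' t' q' (u s' t' q')| ≤
          r s t q * ∫ q' in a..b, f s' t' q' * |u s' t' q'| := by
      intro s' hs' t' ht'
      refine (intervalIntegral.abs_integral_le_integral_abs hab).trans ?_
      rw [← intervalIntegral.integral_const_mul]
      refine intervalIntegral.integral_mono_on hab
        ((stmt4_slice_q (k := fun a1 a2 a3 => F s t q a1 a2 a3 (u a1 a2 a3)) hFU s' t').abs.intervalIntegrable a b)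
        ((continuous_const.mul (stmt4_slice_q (k := fun a1 a2 a3 => f a1 a2 a3 * |u a1 a2 a3|) hfu s' t')).intervalIntegrable a b)
        fun q' hq' => ?_
      simpa [mul_assoc] using
        hF_bound s hs t ht.1 q hq s' hs' t' ht' q' hq' (u s' t' q')
    -- middle level
    have ht_inner : ∀ s', x₀ ≤ s' →
        |∫ t' in y₀..t, ∫ q' in a..b, F s t q s' t' q' (u s' t' q')| ≤
          r s t q * ψ s' := by
      intro s' hs'
      refine (intervalIntegral.abs_integral_le_integral_abs ht.1).trans ?_
      have h2 : (∫ t' in y₀..t, |∫ q' in a..b, F s t q s' t' q' (u s' t' q')|) ≤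
          ∫ t' in y₀..t, r s t q * ∫ q' in a..b, f s' t' q' * |u s' t' q'| := by
        refine intervalIntegral.integral_mono_on ht.1
          ((stmt4_slice_t (k := fun a1 a2 a3 => F s t q a1 a2 a3 (u a1 a2 a3)) hFU s' a b).abs.intervalIntegrable y₀ t)
          ((continuous_const.mul (stmt4_slice_t (k := fun a1 a2 a3 => f a1 a2 a3 * |u a1 a2 a3|) hfu s' a b)).intervalIntegrable y₀ t)
          fun t' ht' => hq_inner s' hs' t' ht'.1
      refine h2.trans ?_
      rw [intervalIntegral.integral_const_mul]
      refine mul_le_mul_of_nonneg_left ?_ hrstq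
      refine intervalIntegral.integral_mono_interval le_rfl ht.1 ht.2 ?_
        ((stmt4_slice_t (k := fun a1 a2 a3 => f a1 a2 a3 * |u a1 a2 a3|) hfu s' a b).intervalIntegrable y₀ y)
      filter_upwards [MeasureTheory.ae_restrict_mem measurableSet_Ioc] with t' ht'
      exact intervalIntegral.integral_nonneg hab fun q' hq' =>
        mul_nonneg (hf_nonneg s' hs' t' ht'.1.le q' hq') (abs_nonneg _)
    -- outer level
    have houter :
        |∫ s' in x₀..s, ∫ t' in y₀..t, ∫ q' in a..b, F s t q s' t' q' (u s' t' q')| ≤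
          r s t q * ∫ s' in x₀..s, ψ s' := by
      refine (intervalIntegral.abs_integral_le_integral_abs hs).trans ?_
      rw [← intervalIntegral.integral_const_mul]
      exact intervalIntegral.integral_mono_on hs
        ((stmt4_cont3 (k := fun a1 a2 a3 => F s t q a1 a2 a3 (u a1 a2 a3)) hFU y₀ t a b).abs.intervalIntegrable x₀ s)
        ((continuous_const.mul hψc).intervalIntegrable x₀ s)
        fun s' hs' => ht_inner s' hs'.1
    rw [heq s hs t ht.1 q hq]
    exact (abs_add_le _ _).trans (add_le_add_right houter _)
  -- integrated bound on ψ
  have claim2 : ∀ s, x₀ ≤ s → ψ s ≤ c s + Q s * ∫ s' in x₀..s, ψ s' := by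
    intro s hs
    set Φ : ℝ := ∫ s' in x₀..s, ψ s' with hΦ
    have hsum : Continuous fun p : ℝ × ℝ × ℝ =>
        f p.1 p.2.1 p.2.2 * |g p.1 p.2.1 p.2.2| +
          f p.1 p.2.1 p.2.2 * r p.1 p.2.1 p.2.2 * Φ :=
      hfg.add (hfr.mul continuous_const)
    have step : ψ s ≤ ∫ t in y₀..y, ∫ q in a..b,
        (f s t q * |g s t q| + f s t q * r s t q * Φ) := by
      refine intervalIntegral.integral_mono_on hy
        ((stmt4_slice_t (k := fun a1 a2 a3 => f a1 a2 a3 * |u a1 a2 a3|) hfu s a b).intervalIntegrable y₀ y)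
        ((stmt4_slice_t (k := fun a1 a2 a3 => f a1 a2 a3 * |g a1 a2 a3| + f a1 a2 a3 * r a1 a2 a3 * Φ) hsum s a b).intervalIntegrable y₀ y)
        fun t ht => ?_
      refine intervalIntegral.integral_mono_on hab
        ((stmt4_slice_q (k := fun a1 a2 a3 => f a1 a2 a3 * |u a1 a2 a3|) hfu s t).intervalIntegrable a b)
        ((stmt4_slice_q (k := fun a1 a2 a3 => f a1 a2 a3 * |g a1 a2 a3| + f a1 a2 a3 * r a1 a2 a3 * Φ) hsum s t).intervalIntegrable a b)
        fun q hq => ?_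
      have hk := key s hs t ht q hq
      have hf0 := hf_nonneg s hs t ht.1 q hq
      nlinarith [mul_le_mul_of_nonneg_left hk hf0]
    refine step.trans_eq ?_
    have e1 : ∀ t' : ℝ, (∫ q in a..b,
        (f s t' q * |g s t' q| + f s t' q * r s t' q * Φ)) =
        (∫ q in a..b, f s t' q * |g s t' q|) +
          (∫ q in a..b, f s t' q * r s t' q) * Φ := by
      intro t'
      rw [intervalIntegral.integral_add ((stmt4_slice_q (k := fun a1 a2 a3 => f a1 a2 a3 * |g a1 a2 a3|) hfg s t').intervalIntegrable a b)
        ((show Continuous fun q => f s t' q * r s t' q * Φ from (stmt4_slice_q (k := fun a1 a2 a3 => f a1 a2 a3 * r a1 a2 a3) hfr s t').mul continuous_const).intervalIntegrable a b),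
        intervalIntegral.integral_mul_const]
    simp_rw [e1]
    rw [intervalIntegral.integral_add ((stmt4_slice_t (k := fun a1 a2 a3 => f a1 a2 a3 * |g a1 a2 a3|) hfg s a b).intervalIntegrable y₀ y)
      ((show Continuous fun t => (∫ q in a..b, f s t q * r s t q) * Φ from (stmt4_slice_t (k := fun a1 a2 a3 => f a1 a2 a3 * r a1 a2 a3) hfr s a b).mul continuous_const).intervalIntegrable y₀ y),
      intervalIntegral.integral_mul_const]
  -- Gronwall
  have hφd : ∀ w : ℝ, HasDerivAt (fun w => ∫ s' in x₀..w, ψ s') (ψ w) w :=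
    fun w => (hψc.integral_hasStrictDerivAt x₀ w).hasDerivAt
  have hCd : ∀ w : ℝ, HasDerivAt (fun w => ∫ s in x₀..w, c s) (c w) w :=
    fun w => (hcc.integral_hasStrictDerivAt x₀ w).hasDerivAt
  have hEd : ∀ w : ℝ, HasDerivAt (fun w => ∫ s in x₀..w, Q s) (Q w) w :=
    fun w => (hQc.integral_hasStrictDerivAt x₀ w).hasDerivAt
  set G : ℝ → ℝ := fun w => (∫ s in x₀..w, c s) -
    (∫ s' in x₀..w, ψ s') * Real.exp (-(∫ s in x₀..w, Q s)) with hGdef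
  have hGd : ∀ w : ℝ, HasDerivAt G
      (c w - (ψ w * Real.exp (-(∫ s in x₀..w, Q s)) +
        (∫ s' in x₀..w, ψ s') * (Real.exp (-(∫ s in x₀..w, Q s)) * -(Q w)))) w := by
    intro w
    exact (hCd w).sub ((hφd w).mul ((hEd w).neg.exp))
  have hG0 : G x₀ = 0 := by
    simp [hGdef, intervalIntegral.integral_same]
  have hmono : MonotoneOn G (Set.Icc x₀ x) := by
    refine monotoneOn_of_hasDerivWithinAt_nonneg (convex_Icc x₀ x)
      (Continuous.continuousOn (continuous_iff_continuousAt.2 fun w => (hGd w).continuousAt))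
      (fun w hw => (hGd w).hasDerivWithinAt) fun w hw => ?_
    rw [interior_Icc] at hw
    have hw0 : x₀ ≤ w := hw.1.le
    have hE0 : 0 ≤ ∫ s in x₀..w, Q s :=
      intervalIntegral.integral_nonneg hw0 fun s hs => hQ0 s hs.1
    have hφ0 : 0 ≤ ∫ s' in x₀..w, ψ s' :=
      intervalIntegral.integral_nonneg hw0 fun s hs => hψ0 s hs.1
    set e : ℝ := Real.exp (-(∫ s in x₀..w, Q s)) with he
    have he1 : e ≤ 1 := Real.exp_le_one_iff.2 (by linarith)
    have he0 : 0 < e := Real.exp_pos _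
    have hA : ψ w * e ≤ (c w + Q w * ∫ s' in x₀..w, ψ s') * e :=
      mul_le_mul_of_nonneg_right (claim2 w hw0) he0.le
    have hB : c w * e ≤ c w := mul_le_of_le_one_right (hc0 w hw0) he1
    nlinarith [hA, hB]
  have hGx : 0 ≤ G x := hG0 ▸ hmono (Set.left_mem_Icc.2 hx) ⟨hx, le_rfl⟩ hx
  have h5 : (∫ s' in x₀..x, ψ s') ≤
      (∫ s in x₀..x, c s) * Real.exp (∫ s in x₀..x, Q s) := by
    have h6 : (∫ s' in x₀..x, ψ s') * Real.exp (-(∫ s in x₀..x, Q s)) ≤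
        ∫ s in x₀..x, c s := by
      have := hGx
      simp only [hGdef] at this
      linarith
    have h7 := mul_le_mul_of_nonneg_right h6 (Real.exp_pos (∫ s in x₀..x, Q s)).le
    rwa [mul_assoc, ← Real.exp_add, neg_add_cancel, Real.exp_zero, mul_one] at h7
  have hk := key x hx y ⟨hy, le_rfl⟩ z hz
  refine hk.trans ?_
  refine add_le_add_right ?_ _
  rw [mul_assoc]
  exact mul_le_mul_of_nonneg_left h5 (hr_nonneg x hx y hy z hz)
end

section
/- Let a, b be natural numbers with a ≤ b. Let g : ℕ³ → ℝ, F : ℕ³ × ℕ³ × ℝ → ℝ, and nonnegative r, f : ℕ³ → ℝ satisfy |F(x,y,z,s,t,q,w)| ≤ r(x,y,z) · f(s,t,q) · |w| for all arguments with a ≤ z ≤ b, a ≤ q ≤ b, and all w ∈ ℝ. Let u : ℕ³ → ℝ satisfy, for all x, y ∈ ℕ and a ≤ z ≤ b, u(x,y,z) = g(x,y,z) + Σ_{s=0}^{x-1} Σ_{t=0}^{y-1} Σ_{q=a}^{b} F(x,y,z,s,t,q,u(s,t,q)). Then for all x, y ∈ ℕ and a ≤ z ≤ b one has |u(x,y,z)|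 ≤ |g(x,y,z)| + r(x,y,z) · C₂(x,y) · ∏_{s=0}^{x-1} (1 + Q₂(s,y)), where C₂(x,y) = Σ_{s=0}^{x-1} Σ_{t=0}^{y-1} Σ_{q=a}^{b} f(s,t,q) |g(s,t,q)| and Q₂(s,y) = Σ_{t=0}^{y-1} Σ_{q=a}^{b} f(s,t,q) r(s,t,q). -/
open Finset

private lemma prod_telescope5 (Q : ℕ → ℝ) (x : ℕ) :
    ∏ s ∈ range x, (1 + Q s) = 1 + ∑ s ∈ range x, Q s * ∏ t ∈ range s, (1 + Q t) := by
  induction x with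
  | zero => simp
  | succ n ih => rw [prod_range_succ, sum_range_succ, ih]; ring

private lemma disc_gronwall5 (C Q A : ℕ → ℝ)
    (hCmono : ∀ s x, s ≤ x → C s ≤ C x) (hQ : ∀ s, 0 ≤ Q s)
    (hrec : ∀ x, A x ≤ C x + ∑ s ∈ range x, Q s * A s) :
    ∀ x, A x ≤ C x * ∏ s ∈ range x, (1 + Q s) := by
  intro x
  induction x using Nat.strong_induction_on with
  | _ x ih =>
    have h1 : ∑ s ∈ range x, Q s * A s
        ≤ ∑ s ∈ range x, Q s * (C x * ∏ t ∈ range s, (1 + Q t)) := by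
      apply sum_le_sum
      intro s hs
      have hsx := mem_range.mp hs
      have hP : (0:ℝ) ≤ ∏ t ∈ range s, (1 + Q t) :=
        prod_nonneg (fun t _ => by linarith [hQ t])
      have h2 : A s ≤ C x * ∏ t ∈ range s, (1 + Q t) :=
        le_trans (ih s hsx) (mul_le_mul_of_nonneg_right (hCmono s x hsx.le) hP)
      exact mul_le_mul_of_nonneg_left h2 (hQ s)
    calc A x ≤ C x + ∑ s ∈ range x, Q s * A s := hrec x
      _ ≤ C x + ∑ s ∈ range x, Q s * (C x * ∏ t ∈ range s, (1 + Q t)) := by linarith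
      _ = C x * (1 + ∑ s ∈ range x, Q s * ∏ t ∈ range s, (1 + Q t)) := by
          rw [mul_add, mul_one, mul_sum]
          congr 1
          exact sum_congr rfl (fun s _ => by ring)
      _ = C x * ∏ s ∈ range x, (1 + Q s) := by rw [prod_telescope5]

/-- Discrete (𝕋 = ℤ, restricted to ℕ with base points 0) case of the paper's
Theorem 3.1: an a priori bound on solutions of a sum (Volterra-type) equation
in three variables, the third variable ranging over the integers `a, …, b`. -/
theorem stmt_5 (a b : ℕ) (hab : a ≤ b)
    (g : ℕ → ℕ → ℕ → ℝ) (F : ℕ → ℕ → ℕ → ℕ → ℕ → ℕ → ℝ → ℝ)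
    (r f : ℕ → ℕ → ℕ → ℝ) (u : ℕ → ℕ → ℕ → ℝ)
    (hr_nonneg : ∀ x y z, 0 ≤ r x y z)
    (hf_nonneg : ∀ x y z, 0 ≤ f x y z)
    (hF_bound : ∀ x y z s t q, a ≤ z → z ≤ b → a ≤ q → q ≤ b → ∀ w : ℝ,
      |F x y z s t q w| ≤ r x y z * f s t q * |w|)
    (heq : ∀ x y z, a ≤ z → z ≤ b →
      u x y z = g x y z +
        ∑ s ∈ Finset.range x, ∑ t ∈ Finset.range y, ∑ q ∈ Finset.Icc a b,
          F x y z s t q (u s t q)) :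
    ∀ x y z, a ≤ z → z ≤ b →
      |u x y z| ≤ |g x y z| + r x y z *
        (∑ s ∈ Finset.range x, ∑ t ∈ Finset.range y, ∑ q ∈ Finset.Icc a b,
          f s t q * |g s t q|) *
        ∏ s ∈ Finset.range x,
          (1 + ∑ t ∈ Finset.range y, ∑ q ∈ Finset.Icc a b,
            f s t q * r s t q) := by
  set A : ℕ → ℕ → ℝ := fun x y =>
    ∑ s ∈ range x, ∑ t ∈ range y, ∑ q ∈ Icc a b, f s t q * |u s t q| with hA
  set C : ℕ → ℕ → ℝ := fun x y =>
    ∑ s ∈ range x, ∑ t ∈ range y, ∑ q ∈ Icc a b, f s t q * |g s t q| with hC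
  set Q : ℕ → ℕ → ℝ := fun s y =>
    ∑ t ∈ range y, ∑ q ∈ Icc a b, f s t q * r s t q with hQ
  -- Claim 1: the basic pointwise bound
  have claim1 : ∀ x y z, a ≤ z → z ≤ b →
      |u x y z| ≤ |g x y z| + r x y z * A x y := by
    intro x y z hz1 hz2
    rw [heq x y z hz1 hz2]
    refine le_trans (abs_add_le _ _) (add_le_add_right ?_ _)
    calc |∑ s ∈ range x, ∑ t ∈ range y, ∑ q ∈ Icc a b, F x y z s t q (u s t q)|
        ≤ ∑ s ∈ range x, ∑ t ∈ range y, ∑ q ∈ Icc a b, |F x y z s t q (u s t q)| := by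
          refine le_trans (Finset.abs_sum_le_sum_abs _ _) (sum_le_sum fun s _ => ?_)
          refine le_trans (Finset.abs_sum_le_sum_abs _ _) (sum_le_sum fun t _ => ?_)
          exact Finset.abs_sum_le_sum_abs _ _
      _ ≤ ∑ s ∈ range x, ∑ t ∈ range y, ∑ q ∈ Icc a b,
            r x y z * (f s t q * |u s t q|) := by
          refine sum_le_sum fun s _ => sum_le_sum fun t _ => sum_le_sum fun q hq => ?_
          rw [← mul_assoc]
          exact hF_bound x y z s t q hz1 hz2 (mem_Icc.mp hq).1 (mem_Icc.mp hq).2 _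
      _ = r x y z * A x y := by
          rw [hA]; simp only [mul_sum]
  -- nonnegativity / monotonicity facts
  have hAnn : ∀ x y, 0 ≤ A x y := fun x y =>
    sum_nonneg fun s _ => sum_nonneg fun t _ => sum_nonneg fun q _ =>
      mul_nonneg (hf_nonneg s t q) (abs_nonneg _)
  have hAmono : ∀ x y y', y' ≤ y → A x y' ≤ A x y := by
    intro x y y' hy
    refine sum_le_sum fun s _ => ?_
    refine sum_le_sum_of_subset_of_nonneg (range_subset_range.mpr hy) fun t _ _ => ?_
    exact sum_nonneg fun q _ => mul_nonneg (hf_nonneg s t q) (abs_nonneg _)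
  have hQnn : ∀ s y, 0 ≤ Q s y := fun s y =>
    sum_nonneg fun t _ => sum_nonneg fun q _ =>
      mul_nonneg (hf_nonneg s t q) (hr_nonneg s t q)
  have hCmono : ∀ y s x, s ≤ x → C s y ≤ C x y := by
    intro y s x hsx
    refine sum_le_sum_of_subset_of_nonneg (range_subset_range.mpr hsx) fun s' _ _ => ?_
    exact sum_nonneg fun t _ => sum_nonneg fun q _ =>
      mul_nonneg (hf_nonneg s' t q) (abs_nonneg _)
  -- Claim 2: recursive inequality for A
  have claim2 : ∀ y x, A x y ≤ C x y + ∑ s ∈ range x, Q s y * A s y := by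
    intro y x
    rw [hA, hC, hQ]
    simp only
    rw [← sum_add_distrib]
    refine sum_le_sum fun s _ => ?_
    rw [sum_mul, ← sum_add_distrib]
    refine sum_le_sum fun t ht => ?_
    rw [sum_mul, ← sum_add_distrib]
    refine sum_le_sum fun q hq => ?_
    have hq' := mem_Icc.mp hq
    have h1 : |u s t q| ≤ |g s t q| + r s t q * A s y := by
      refine le_trans (claim1 s t q hq'.1 hq'.2) (add_le_add_right ?_ _)
      exact mul_le_mul_of_nonneg_left (hAmono s y t (mem_range.mp ht).le)
        (hr_nonneg s t q)
    calc f s t q * |u s t q| ≤ f s t q * (|g s t q| + r s t q * A s y) :=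
          mul_le_mul_of_nonneg_left h1 (hf_nonneg s t q)
      _ = f s t q * |g s t q| + f s t q * r s t q * A s y := by ring
  -- Gronwall
  have key : ∀ y x, A x y ≤ C x y * ∏ s ∈ range x, (1 + Q s y) := by
    intro y
    exact disc_gronwall5 (fun x => C x y) (fun s => Q s y) (fun x => A x y)
      (hCmono y) (fun s => hQnn s y) (claim2 y)
  intro x y z hz1 hz2
  refine le_trans (claim1 x y z hz1 hz2) (add_le_add_right ?_ _)
  calc r x y z * A x y ≤ r x y z * (C x y * ∏ s ∈ range x, (1 + Q s y)) :=
        mul_le_mul_of_nonneg_left (key y x) (hr_nonneg x y z)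
    _ = r x y z * C x y * ∏ s ∈ range x, (1 + Q s y) := by ring
end

section
/- Let x₀, y₀, a, b be real numbers with a ≤ b, and let H = [x₀,∞) × [y₀,∞) × [a,b]. Let g : ℝ³ → ℝ and F : ℝ³ × ℝ³ × ℝ → ℝ be continuous, and let r, f : ℝ³ → ℝ be continuous and nonnegative on H, with the Lipschitz-type condition |F(x,y,z,s,t,q,w) − F(x,y,z,s,t,q,v)| ≤ r(x,y,z) · f(s,t,q) · |w − v| for all (x,y,z), (s,t,q) ∈ H and all w, v ∈ ℝ. Let u : ℝ³ → ℝ be continuous and satisfy, for all (x,y,z) ∈ H, u(x,y,z) = g(x,y,z) + ∫_{x₀}^{x} ∫_{y₀}^{y} ∫_{a}^{b} F(x,y,z,s,t,q,u(s,t,q)) dq dt ds. Define k(x,y,z) = ∫_{x₀}^{x} ∫_{y₀}^{y} ∫_{a}^{b} |F(x,y,z,s,t,q,g(s,t,q))| dq dt ds. Then for all (x,y,z) ∈ H one has |u(x,y,z) − g(x,y,z)| ≤ k(x,y,z) + r(x,y,z) · C₃(x,y) · exp(∫_{x₀}^{x} Q₂(s,y) ds), where C₃(x,y) = ∫_{x₀}^{x}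 ∫_{y₀}^{y} ∫_{a}^{b} f(s,t,q) k(s,t,q) dq dt ds and Q₂(s,y) = ∫_{y₀}^{y} ∫_{a}^{b} f(s,t,q) r(s,t,q) dq dt. -/
open MeasureTheory Set intervalIntegral

section Helpers

variable {α : Type*} [TopologicalSpace α]

lemma comp3c {h : ℝ → ℝ → ℝ → ℝ} (hh : Continuous fun p : ℝ × ℝ × ℝ => h p.1 p.2.1 p.2.2)
    {A B C : α → ℝ} (hA : Continuous A) (hB : Continuous B) (hC : Continuous C) :
    Continuous fun w => h (A w) (B w) (C w) :=
  hh.comp (hA.prodMk (hB.prodMk hC))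

lemma comp7c {F : ℝ → ℝ → ℝ → ℝ → ℝ → ℝ → ℝ → ℝ}
    (hF : Continuous fun p : (ℝ × ℝ × ℝ) × (ℝ × ℝ × ℝ) × ℝ =>
      F p.1.1 p.1.2.1 p.1.2.2 p.2.1.1 p.2.1.2.1 p.2.1.2.2 p.2.2)
    {A B C D E G H : α → ℝ} (hA : Continuous A) (hB : Continuous B) (hC : Continuous C)
    (hD : Continuous D) (hE : Continuous E) (hG : Continuous G) (hH : Continuous H) :
    Continuous fun w => F (A w) (B w) (C w) (D w) (E w) (G w) (H w) :=
  hF.comp ((hA.prodMk (hB.prodMk hC)).prodMk ((hD.prodMk (hE.prodMk hG)).prodMk hH))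

end Helpers

section Triple

lemma contInn {G : ℝ → ℝ → ℝ → ℝ}
    (hG : Continuous fun p : ℝ × ℝ × ℝ => G p.1 p.2.1 p.2.2) (a b s : ℝ) :
    Continuous fun t : ℝ => ∫ q in a..b, G s t q :=
  continuous_parametric_intervalIntegral_of_continuous' (μ := volume)
    (f := fun t q => G s t q)
    (comp3c hG continuous_const continuous_fst continuous_snd) a b

lemma contMid {G : ℝ → ℝ → ℝ → ℝ}
    (hG : Continuous fun p : ℝ × ℝ × ℝ => G p.1 p.2.1 p.2.2) (y₀ a b y : ℝ) :
    Continuous fun s : ℝ => ∫ t in y₀..y, ∫ q in a..b, G s t q := by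
  have h1 : Continuous fun p : (ℝ × ℝ) × ℝ => G p.1.1 p.1.2 p.2 :=
    comp3c hG (continuous_fst.comp continuous_fst) (continuous_snd.comp continuous_fst)
      continuous_snd
  have h2 : Continuous fun p : ℝ × ℝ => ∫ q in a..b, G p.1 p.2 q :=
    continuous_parametric_intervalIntegral_of_continuous' (μ := volume)
      (f := fun (p : ℝ × ℝ) q => G p.1 p.2 q) h1 a b
  exact continuous_parametric_intervalIntegral_of_continuous' (μ := volume)
    (f := fun s t => ∫ q in a..b, G s t q) h2 y₀ y

lemma I3_mono (x₀ y₀ a b x y : ℝ) {G G' : ℝ → ℝ → ℝ → ℝ}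
    (hG : Continuous fun p : ℝ × ℝ × ℝ => G p.1 p.2.1 p.2.2)
    (hG' : Continuous fun p : ℝ × ℝ × ℝ => G' p.1 p.2.1 p.2.2)
    (hx : x₀ ≤ x) (hy : y₀ ≤ y) (hab : a ≤ b)
    (hle : ∀ s ∈ Icc x₀ x, ∀ t ∈ Icc y₀ y, ∀ q ∈ Icc a b, G s t q ≤ G' s t q) :
    (∫ s in x₀..x, ∫ t in y₀..y, ∫ q in a..b, G s t q) ≤
      ∫ s in x₀..x, ∫ t in y₀..y, ∫ q in a..b, G' s t q := by
  apply intervalIntegral.integral_mono_on hx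
    ((contMid hG y₀ a b y).intervalIntegrable _ _)
    ((contMid hG' y₀ a b y).intervalIntegrable _ _)
  intro s hs
  apply intervalIntegral.integral_mono_on hy
    ((contInn hG a b s).intervalIntegrable _ _)
    ((contInn hG' a b s).intervalIntegrable _ _)
  intro t ht
  apply intervalIntegral.integral_mono_on hab
    ((comp3c hG continuous_const continuous_const continuous_id).intervalIntegrable _ _)
    ((comp3c hG' continuous_const continuous_const continuous_id).intervalIntegrable _ _)
  exact hle s hs t ht

lemma I3_abs_le (x₀ y₀ a b x y : ℝ) {G : ℝ → ℝ → ℝ → ℝ}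
    (hG : Continuous fun p : ℝ × ℝ × ℝ => G p.1 p.2.1 p.2.2)
    (hx : x₀ ≤ x) (hy : y₀ ≤ y) (hab : a ≤ b) :
    |∫ s in x₀..x, ∫ t in y₀..y, ∫ q in a..b, G s t q| ≤
      ∫ s in x₀..x, ∫ t in y₀..y, ∫ q in a..b, |G s t q| := by
  refine (intervalIntegral.abs_integral_le_integral_abs hx).trans ?_
  apply intervalIntegral.integral_mono_on hx
    ((contMid hG y₀ a b y).abs.intervalIntegrable _ _)
    ((contMid (G := fun s t q => |G s t q|) hG.abs y₀ a b y).intervalIntegrable _ _)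
  intro s _
  refine (intervalIntegral.abs_integral_le_integral_abs hy).trans ?_
  apply intervalIntegral.integral_mono_on hy
    ((contInn hG a b s).abs.intervalIntegrable _ _)
    ((contInn (G := fun s t q => |G s t q|) hG.abs a b s).intervalIntegrable _ _)
  intro t _
  exact intervalIntegral.abs_integral_le_integral_abs hab

lemma I3_add (x₀ y₀ a b x y : ℝ) {G G' : ℝ → ℝ → ℝ → ℝ}
    (hG : Continuous fun p : ℝ × ℝ × ℝ => G p.1 p.2.1 p.2.2)
    (hG' : Continuous fun p : ℝ × ℝ × ℝ => G' p.1 p.2.1 p.2.2) :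
    (∫ s in x₀..x, ∫ t in y₀..y, ∫ q in a..b, (G s t q + G' s t q)) =
      (∫ s in x₀..x, ∫ t in y₀..y, ∫ q in a..b, G s t q) +
        ∫ s in x₀..x, ∫ t in y₀..y, ∫ q in a..b, G' s t q := by
  have e1 : ∀ s t : ℝ, (∫ q in a..b, (G s t q + G' s t q)) =
      (∫ q in a..b, G s t q) + ∫ q in a..b, G' s t q := fun s t =>
    intervalIntegral.integral_add
      ((comp3c hG continuous_const continuous_const continuous_id).intervalIntegrable _ _)
      ((comp3c hG' continuous_const continuous_const continuous_id).intervalIntegrable _ _)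
  have e2 : ∀ s : ℝ, (∫ t in y₀..y, ((∫ q in a..b, G s t q) + ∫ q in a..b, G' s t q)) =
      (∫ t in y₀..y, ∫ q in a..b, G s t q) + ∫ t in y₀..y, ∫ q in a..b, G' s t q := fun s =>
    intervalIntegral.integral_add
      ((contInn hG a b s).intervalIntegrable _ _)
      ((contInn hG' a b s).intervalIntegrable _ _)
  simp only [e1, e2]
  exact intervalIntegral.integral_add
    ((contMid hG y₀ a b y).intervalIntegrable _ _)
    ((contMid hG' y₀ a b y).intervalIntegrable _ _)

end Triple

/-- Integral form of Gronwall's inequality on `[x₀, X]`. -/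
lemma gronwall_int (x₀ X C : ℝ) (hX : x₀ ≤ X) (v p : ℝ → ℝ)
    (hv : Continuous v) (hp : Continuous p)
    (hp0 : ∀ s ∈ Set.Icc x₀ X, 0 ≤ p s)
    (h : ∀ s ∈ Set.Icc x₀ X, v s ≤ C + ∫ τ in x₀..s, p τ * v τ) :
    v X ≤ C * Real.exp (∫ τ in x₀..X, p τ) := by
  have hpv : Continuous fun τ => p τ * v τ := hp.mul hv
  have hw' : ∀ s : ℝ, HasDerivAt (fun x => C + ∫ τ in x₀..x, p τ * v τ) (p s * v s) s := by
    intro s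
    exact HasDerivAt.const_add C (intervalIntegral.integral_hasDerivAt_right
      (hpv.intervalIntegrable x₀ s) (hpv.stronglyMeasurableAtFilter volume (nhds s))
      hpv.continuousAt)
  have hP' : ∀ s : ℝ, HasDerivAt (fun x => ∫ τ in x₀..x, p τ) (p s) s := fun s =>
    intervalIntegral.integral_hasDerivAt_right (hp.intervalIntegrable x₀ s)
      (hp.stronglyMeasurableAtFilter volume (nhds s)) hp.continuousAt
  have hφ' : ∀ s : ℝ, HasDerivAt
      (fun x => (C + ∫ τ in x₀..x, p τ * v τ) * Real.exp (-(∫ τ in x₀..x, p τ)))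
      ((p s * v s) * Real.exp (-(∫ τ in x₀..s, p τ)) +
        (C + ∫ τ in x₀..s, p τ * v τ) * (Real.exp (-(∫ τ in x₀..s, p τ)) * -(p s))) s := by
    intro s
    exact (hw' s).mul ((hP' s).neg.exp)
  have hanti : AntitoneOn
      (fun x => (C + ∫ τ in x₀..x, p τ * v τ) * Real.exp (-(∫ τ in x₀..x, p τ)))
      (Set.Icc x₀ X) := by
    apply antitoneOn_of_deriv_nonpos (convex_Icc _ _)
    · exact (Differentiable.continuous fun s => (hφ' s).differentiableAt).continuousOn
    · intro s _
      exact (hφ' s).differentiableAt.differentiableWithinAt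
    · intro s hs
      rw [interior_Icc] at hs
      rw [(hφ' s).deriv]
      have hvw : v s ≤ C + ∫ τ in x₀..s, p τ * v τ := h s ⟨hs.1.le, hs.2.le⟩
      have hps : 0 ≤ p s := hp0 s ⟨hs.1.le, hs.2.le⟩
      have hex : (0:ℝ) < Real.exp (-(∫ τ in x₀..s, p τ)) := Real.exp_pos _
      nlinarith [mul_le_mul_of_nonneg_right (mul_le_mul_of_nonneg_left hvw hps) hex.le]
  have h1 := hanti (Set.left_mem_Icc.2 hX) (Set.right_mem_Icc.2 hX) hX
  simp only [intervalIntegral.integral_same, add_zero, neg_zero, Real.exp_zero, mul_one] at h1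
  have h2 := mul_le_mul_of_nonneg_right h1 (Real.exp_pos (∫ τ in x₀..X, p τ)).le
  have h3 : Real.exp (-(∫ τ in x₀..X, p τ)) * Real.exp (∫ τ in x₀..X, p τ) = 1 := by
    rw [← Real.exp_add]; simp
  rw [mul_assoc, h3, mul_one] at h2
  exact (h X (Set.right_mem_Icc.2 hX)).trans h2

set_option maxHeartbeats 1000000 in
/-- Continuous (𝕋 = ℝ) case of the paper's Theorem 3.2: estimate of the
deviation of a solution of a Volterra-type integral equation in three
variables from its forcing term, under a Lipschitz condition on the kernel. -/
theorem stmt_6 (x₀ y₀ a b : ℝ) (hab : a ≤ b)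
    (g : ℝ → ℝ → ℝ → ℝ) (F : ℝ → ℝ → ℝ → ℝ → ℝ → ℝ → ℝ → ℝ)
    (r f : ℝ → ℝ → ℝ → ℝ) (u : ℝ → ℝ → ℝ → ℝ) (k : ℝ → ℝ → ℝ → ℝ)
    (hg_cont : Continuous (fun p : ℝ × ℝ × ℝ => g p.1 p.2.1 p.2.2))
    (hF_cont : Continuous (fun p : (ℝ × ℝ × ℝ) × (ℝ × ℝ × ℝ) × ℝ =>
      F p.1.1 p.1.2.1 p.1.2.2 p.2.1.1 p.2.1.2.1 p.2.1.2.2 p.2.2))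
    (hr_cont : Continuous (fun p : ℝ × ℝ × ℝ => r p.1 p.2.1 p.2.2))
    (hf_cont : Continuous (fun p : ℝ × ℝ × ℝ => f p.1 p.2.1 p.2.2))
    (hu_cont : Continuous (fun p : ℝ × ℝ × ℝ => u p.1 p.2.1 p.2.2))
    (hr_nonneg : ∀ x, x₀ ≤ x → ∀ y, y₀ ≤ y → ∀ z ∈ Set.Icc a b, 0 ≤ r x y z)
    (hf_nonneg : ∀ x, x₀ ≤ x → ∀ y, y₀ ≤ y → ∀ z ∈ Set.Icc a b, 0 ≤ f x y z)
    (hF_lip : ∀ x, x₀ ≤ x → ∀ y, y₀ ≤ y → ∀ z ∈ Set.Icc a b,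
      ∀ s, x₀ ≤ s → ∀ t, y₀ ≤ t → ∀ q ∈ Set.Icc a b, ∀ w v : ℝ,
        |F x y z s t q w - F x y z s t q v| ≤ r x y z * f s t q * |w - v|)
    (heq : ∀ x, x₀ ≤ x → ∀ y, y₀ ≤ y → ∀ z ∈ Set.Icc a b,
      u x y z = g x y z +
        ∫ s in x₀..x, ∫ t in y₀..y, ∫ q in a..b, F x y z s t q (u s t q))
    (hk : ∀ x y z : ℝ, k x y z =
      ∫ s in x₀..x, ∫ t in y₀..y, ∫ q in a..b,
        |F x y z s t q (g s t q)|) :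
    ∀ x, x₀ ≤ x → ∀ y, y₀ ≤ y → ∀ z ∈ Set.Icc a b,
      |u x y z - g x y z| ≤ k x y z + r x y z *
        (∫ s in x₀..x, ∫ t in y₀..y, ∫ q in a..b, f s t q * k s t q) *
        Real.exp (∫ s in x₀..x, ∫ t in y₀..y, ∫ q in a..b,
          f s t q * r s t q) := by
  have hE_cont : Continuous fun p : ℝ × ℝ × ℝ => |u p.1 p.2.1 p.2.2 - g p.1 p.2.1 p.2.2| :=
    (hu_cont.sub hg_cont).abs
  have hfE_cont : Continuous fun p : ℝ × ℝ × ℝ =>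
      f p.1 p.2.1 p.2.2 * |u p.1 p.2.1 p.2.2 - g p.1 p.2.1 p.2.2| := hf_cont.mul hE_cont
  have hfr_cont : Continuous fun p : ℝ × ℝ × ℝ => f p.1 p.2.1 p.2.2 * r p.1 p.2.1 p.2.2 :=
    hf_cont.mul hr_cont
  -- continuity of k
  have hk_cont : Continuous fun p : ℝ × ℝ × ℝ => k p.1 p.2.1 p.2.2 := by
    have h1 : Continuous fun w : ((ℝ × ℝ × ℝ) × ℝ) × ℝ =>
        ∫ q in a..b, |F w.1.1.1 w.1.1.2.1 w.1.1.2.2 w.1.2 w.2 q (g w.1.2 w.2 q)| := by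
      apply continuous_parametric_intervalIntegral_of_continuous' (μ := volume)
        (f := fun (w : ((ℝ × ℝ × ℝ) × ℝ) × ℝ) q =>
          |F w.1.1.1 w.1.1.2.1 w.1.1.2.2 w.1.2 w.2 q (g w.1.2 w.2 q)|)
      exact (comp7c hF_cont (by fun_prop) (by fun_prop) (by fun_prop) (by fun_prop) (by fun_prop)
        (by fun_prop) (comp3c hg_cont (by fun_prop) (by fun_prop) (by fun_prop))).abs
    have h2 : Continuous fun w : (ℝ × ℝ × ℝ) × ℝ =>
        ∫ t in y₀..w.1.2.1, ∫ q in a..b,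
          |F w.1.1 w.1.2.1 w.1.2.2 w.2 t q (g w.2 t q)| := by
      apply continuous_parametric_intervalIntegral_of_continuous (μ := volume)
        (f := fun (w : (ℝ × ℝ × ℝ) × ℝ) t => ∫ q in a..b,
          |F w.1.1 w.1.2.1 w.1.2.2 w.2 t q (g w.2 t q)|)
        (s := fun w => w.1.2.1) h1 (by fun_prop)
    have h3 : Continuous fun p : ℝ × ℝ × ℝ =>
        ∫ s in x₀..p.1, ∫ t in y₀..p.2.1, ∫ q in a..b,
          |F p.1 p.2.1 p.2.2 s t q (g s t q)| := by
      apply continuous_parametric_intervalIntegral_of_continuous (μ := volume)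
        (f := fun (p : ℝ × ℝ × ℝ) s => ∫ t in y₀..p.2.1, ∫ q in a..b,
          |F p.1 p.2.1 p.2.2 s t q (g s t q)|)
        (s := fun p => p.1) h2 continuous_fst
    simp only [hk]
    exact h3
  have hfk_cont : Continuous fun p : ℝ × ℝ × ℝ =>
      f p.1 p.2.1 p.2.2 * k p.1 p.2.1 p.2.2 := hf_cont.mul hk_cont
  -- nonnegativity of k on H
  have hk_nonneg : ∀ X, x₀ ≤ X → ∀ Y, y₀ ≤ Y → ∀ Z : ℝ, 0 ≤ k X Y Z := by
    intro X hX Y hY Z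
    rw [hk]
    exact intervalIntegral.integral_nonneg hX fun s _ =>
      intervalIntegral.integral_nonneg hY fun t _ =>
        intervalIntegral.integral_nonneg hab fun q _ => abs_nonneg _
  -- monotonicity of m in the second variable
  have hm_mono : ∀ s, x₀ ≤ s → ∀ t, y₀ ≤ t → ∀ Y, t ≤ Y →
      (∫ s' in x₀..s, ∫ t' in y₀..t, ∫ q in a..b,
        f s' t' q * |u s' t' q - g s' t' q|) ≤
      ∫ s' in x₀..s, ∫ t' in y₀..Y, ∫ q in a..b,
        f s' t' q * |u s' t' q - g s' t' q| := by
    intro s hs t ht Y htY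
    apply intervalIntegral.integral_mono_on hs
      ((contMid (G := fun s t q => f s t q * |u s t q - g s t q|) hfE_cont y₀ a b t).intervalIntegrable _ _)
      ((contMid (G := fun s t q => f s t q * |u s t q - g s t q|) hfE_cont y₀ a b Y).intervalIntegrable _ _)
    intro s' hs'
    refine intervalIntegral.integral_mono_interval le_rfl ht htY ?_
      ((contInn (G := fun s t q => f s t q * |u s t q - g s t q|) hfE_cont a b s').intervalIntegrable _ _)
    filter_upwards [ae_restrict_mem measurableSet_Ioc] with t' ht'
    exact intervalIntegral.integral_nonneg hab fun q hq =>
      mul_nonneg (hf_nonneg s' hs'.1 t' ht'.1.le q hq) (abs_nonneg _)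
  -- Step A : pointwise bound on H
  have stepA : ∀ X, x₀ ≤ X → ∀ Y, y₀ ≤ Y → ∀ Z ∈ Set.Icc a b,
      |u X Y Z - g X Y Z| ≤ k X Y Z + r X Y Z *
        ∫ s in x₀..X, ∫ t in y₀..Y, ∫ q in a..b,
          f s t q * |u s t q - g s t q| := by
    intro X hX Y hY Z hZ
    have hFu_cont : Continuous fun p : ℝ × ℝ × ℝ =>
        F X Y Z p.1 p.2.1 p.2.2 (u p.1 p.2.1 p.2.2) :=
      comp7c hF_cont continuous_const continuous_const continuous_const (by fun_prop)
        (by fun_prop) (by fun_prop) hu_cont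
    have hFg_cont : Continuous fun p : ℝ × ℝ × ℝ =>
        |F X Y Z p.1 p.2.1 p.2.2 (g p.1 p.2.1 p.2.2)| :=
      (comp7c hF_cont continuous_const continuous_const continuous_const (by fun_prop)
        (by fun_prop) (by fun_prop) hg_cont).abs
    have hRHS_cont : Continuous fun p : ℝ × ℝ × ℝ =>
        |F X Y Z p.1 p.2.1 p.2.2 (g p.1 p.2.1 p.2.2)| +
          r X Y Z * (f p.1 p.2.1 p.2.2 * |u p.1 p.2.1 p.2.2 - g p.1 p.2.1 p.2.2|) :=
      hFg_cont.add (continuous_const.mul hfE_cont)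
    have he : u X Y Z - g X Y Z =
        ∫ s in x₀..X, ∫ t in y₀..Y, ∫ q in a..b, F X Y Z s t q (u s t q) := by
      rw [heq X hX Y hY Z hZ]; ring
    rw [he]
    refine (I3_abs_le x₀ y₀ a b X Y (G := fun s t q => F X Y Z s t q (u s t q)) hFu_cont hX hY hab).trans ?_
    have h2 : (∫ s in x₀..X, ∫ t in y₀..Y, ∫ q in a..b, |F X Y Z s t q (u s t q)|)
        ≤ ∫ s in x₀..X, ∫ t in y₀..Y, ∫ q in a..b,
            (|F X Y Z s t q (g s t q)| +
              r X Y Z * (f s t q * |u s t q - g s t q|)) := by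
      apply I3_mono x₀ y₀ a b X Y (G := fun s t q => |F X Y Z s t q (u s t q)|)
        (G' := fun s t q => |F X Y Z s t q (g s t q)| +
          r X Y Z * (f s t q * |u s t q - g s t q|)) hFu_cont.abs hRHS_cont hX hY hab
      intro s hs t ht q hq
      have hlip := hF_lip X hX Y hY Z hZ s hs.1 t ht.1 q hq (u s t q) (g s t q)
      have habs : |F X Y Z s t q (u s t q)| ≤ |F X Y Z s t q (g s t q)| +
          |F X Y Z s t q (u s t q) - F X Y Z s t q (g s t q)| := by
        have h := abs_add_le (F X Y Z s t q (g s t q))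
          (F X Y Z s t q (u s t q) - F X Y Z s t q (g s t q))
        rw [add_sub_cancel] at h
        exact h
      nlinarith [hlip, habs]
    refine h2.trans ?_
    have hsplit : (∫ s in x₀..X, ∫ t in y₀..Y, ∫ q in a..b,
        (|F X Y Z s t q (g s t q)| + r X Y Z * (f s t q * |u s t q - g s t q|))) =
        (∫ s in x₀..X, ∫ t in y₀..Y, ∫ q in a..b, |F X Y Z s t q (g s t q)|) +
          ∫ s in x₀..X, ∫ t in y₀..Y, ∫ q in a..b,
            r X Y Z * (f s t q * |u s t q - g s t q|) :=
      I3_add x₀ y₀ a b X Y (G := fun s t q => |F X Y Z s t q (g s t q)|)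
        (G' := fun s t q => r X Y Z * (f s t q * |u s t q - g s t q|))
        hFg_cont (continuous_const.mul hfE_cont)
    rw [hsplit, hk]
    simp only [intervalIntegral.integral_const_mul]
    exact le_rfl
  -- now fix the point
  intro x hx y hy z hz
  have hp_cont : Continuous fun s : ℝ =>
      ∫ t in y₀..y, ∫ q in a..b, f s t q * r s t q := contMid hfr_cont y₀ a b y
  have hv_cont : Continuous fun X : ℝ =>
      ∫ s in x₀..X, ∫ t in y₀..y, ∫ q in a..b,
        f s t q * |u s t q - g s t q| :=
    intervalIntegral.continuous_primitive
      (fun _ _ => (contMid (G := fun s t q => f s t q * |u s t q - g s t q|) hfE_cont y₀ a b y).intervalIntegrable _ _) x₀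
  have hv1_cont : Continuous fun p : ℝ × ℝ × ℝ =>
      ∫ s' in x₀..p.1, ∫ t in y₀..y, ∫ q in a..b,
        f s' t q * |u s' t q - g s' t q| := hv_cont.comp continuous_fst
  have hC_mono : ∀ x', x₀ ≤ x' → x' ≤ x →
      (∫ s in x₀..x', ∫ t in y₀..y, ∫ q in a..b, f s t q * k s t q) ≤
      ∫ s in x₀..x, ∫ t in y₀..y, ∫ q in a..b, f s t q * k s t q := by
    intro x' h1 h2
    refine intervalIntegral.integral_mono_interval le_rfl h1 h2 ?_
      ((contMid (G := fun s t q => f s t q * k s t q) hfk_cont y₀ a b y).intervalIntegrable _ _)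
    filter_upwards [ae_restrict_mem measurableSet_Ioc] with s hs
    exact intervalIntegral.integral_nonneg hy fun t ht =>
      intervalIntegral.integral_nonneg hab fun q hq =>
        mul_nonneg (hf_nonneg s hs.1.le t ht.1 q hq) (hk_nonneg s hs.1.le t ht.1 q)
  -- Step B : integral inequality for v on [x₀, x]
  have stepB : ∀ x' ∈ Set.Icc x₀ x,
      (∫ s' in x₀..x', ∫ t in y₀..y, ∫ q in a..b,
        f s' t q * |u s' t q - g s' t q|) ≤
      (∫ s in x₀..x, ∫ t in y₀..y, ∫ q in a..b, f s t q * k s t q) +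
        ∫ τ in x₀..x', (∫ t in y₀..y, ∫ q in a..b, f τ t q * r τ t q) *
          ∫ s' in x₀..τ, ∫ t in y₀..y, ∫ q in a..b,
            f s' t q * |u s' t q - g s' t q| := by
    intro x' hx'
    have hG'_cont : Continuous fun p : ℝ × ℝ × ℝ =>
        f p.1 p.2.1 p.2.2 * k p.1 p.2.1 p.2.2 +
          f p.1 p.2.1 p.2.2 * r p.1 p.2.1 p.2.2 *
            ∫ s' in x₀..p.1, ∫ t in y₀..y, ∫ q in a..b,
              f s' t q * |u s' t q - g s' t q| :=
      hfk_cont.add (hfr_cont.mul hv1_cont)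
    have hmono : (∫ s in x₀..x', ∫ t in y₀..y, ∫ q in a..b,
          f s t q * |u s t q - g s t q|) ≤
        ∫ s in x₀..x', ∫ t in y₀..y, ∫ q in a..b,
          (f s t q * k s t q + f s t q * r s t q *
            ∫ s' in x₀..s, ∫ t' in y₀..y, ∫ q' in a..b,
              f s' t' q' * |u s' t' q' - g s' t' q'|) := by
      apply I3_mono x₀ y₀ a b x' y (G := fun s t q => f s t q * |u s t q - g s t q|)
        (G' := fun s t q => f s t q * k s t q + f s t q * r s t q *
          ∫ s' in x₀..s, ∫ t' in y₀..y, ∫ q' in a..b,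
            f s' t' q' * |u s' t' q' - g s' t' q'|)
        hfE_cont hG'_cont hx'.1 hy hab
      intro s hs t ht q hq
      have hA := stepA s hs.1 t ht.1 q hq
      have hmm := hm_mono s hs.1 t ht.1 y ht.2
      have hf0 := hf_nonneg s hs.1 t ht.1 q hq
      have hr0 := hr_nonneg s hs.1 t ht.1 q hq
      nlinarith [mul_le_mul_of_nonneg_left hA hf0,
        mul_le_mul_of_nonneg_left hmm (mul_nonneg hf0 hr0), abs_nonneg (u s t q - g s t q)]
    refine hmono.trans ?_
    have hsplit2 : (∫ s in x₀..x', ∫ t in y₀..y, ∫ q in a..b,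
        (f s t q * k s t q + f s t q * r s t q *
          ∫ s' in x₀..s, ∫ t' in y₀..y, ∫ q' in a..b,
            f s' t' q' * |u s' t' q' - g s' t' q'|)) =
        (∫ s in x₀..x', ∫ t in y₀..y, ∫ q in a..b, f s t q * k s t q) +
          ∫ s in x₀..x', ∫ t in y₀..y, ∫ q in a..b,
            f s t q * r s t q *
              ∫ s' in x₀..s, ∫ t' in y₀..y, ∫ q' in a..b,
                f s' t' q' * |u s' t' q' - g s' t' q'| :=
      I3_add x₀ y₀ a b x' y (G := fun s t q => f s t q * k s t q)
        (G' := fun s t q => f s t q * r s t q *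
          ∫ s' in x₀..s, ∫ t' in y₀..y, ∫ q' in a..b,
            f s' t' q' * |u s' t' q' - g s' t' q'|)
        hfk_cont (hfr_cont.mul hv1_cont)
    rw [hsplit2]
    have hpull : (∫ s in x₀..x', ∫ t in y₀..y, ∫ q in a..b,
        f s t q * r s t q *
          ∫ s' in x₀..s, ∫ t' in y₀..y, ∫ q' in a..b,
            f s' t' q' * |u s' t' q' - g s' t' q'|) =
        ∫ τ in x₀..x', (∫ t in y₀..y, ∫ q in a..b, f τ t q * r τ t q) *
          ∫ s' in x₀..τ, ∫ t in y₀..y, ∫ q in a..b,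
            f s' t q * |u s' t q - g s' t q| := by
      simp only [intervalIntegral.integral_mul_const]
    rw [hpull]
    have := hC_mono x' hx'.1 hx'.2
    linarith
  -- Gronwall
  have hp0 : ∀ s ∈ Set.Icc x₀ x, 0 ≤
      ∫ t in y₀..y, ∫ q in a..b, f s t q * r s t q := by
    intro s hs
    exact intervalIntegral.integral_nonneg hy fun t ht =>
      intervalIntegral.integral_nonneg hab fun q hq =>
        mul_nonneg (hf_nonneg s hs.1 t ht.1 q hq) (hr_nonneg s hs.1 t ht.1 q hq)
  have hGr : (∫ s in x₀..x, ∫ t in y₀..y, ∫ q in a..b,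
      f s t q * |u s t q - g s t q|) ≤
      (∫ s in x₀..x, ∫ t in y₀..y, ∫ q in a..b, f s t q * k s t q) *
        Real.exp (∫ s in x₀..x, ∫ t in y₀..y, ∫ q in a..b, f s t q * r s t q) :=
    gronwall_int x₀ x
      (∫ s in x₀..x, ∫ t in y₀..y, ∫ q in a..b, f s t q * k s t q) hx
      (fun X => ∫ s' in x₀..X, ∫ t in y₀..y, ∫ q in a..b,
        f s' t q * |u s' t q - g s' t q|)
      (fun s => ∫ t in y₀..y, ∫ q in a..b, f s t q * r s t q)
      hv_cont hp_cont hp0 stepB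
  -- conclude
  have hA := stepA x hx y hy z hz
  have hr0 := hr_nonneg x hx y hy z hz
  have hmul := mul_le_mul_of_nonneg_left hGr hr0
  calc |u x y z - g x y z| ≤ k x y z + r x y z *
      ∫ s in x₀..x, ∫ t in y₀..y, ∫ q in a..b,
        f s t q * |u s t q - g s t q| := hA
    _ ≤ k x y z + r x y z *
        ((∫ s in x₀..x, ∫ t in y₀..y, ∫ q in a..b, f s t q * k s t q) *
          Real.exp (∫ s in x₀..x, ∫ t in y₀..y, ∫ q in a..b, f s t q * r s t q)) := by
        linarith
    _ = k x y z + r x y z *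
        (∫ s in x₀..x, ∫ t in y₀..y, ∫ q in a..b, f s t q * k s t q) *
        Real.exp (∫ s in x₀..x, ∫ t in y₀..y, ∫ q in a..b, f s t q * r s t q) := by
        ring
end

section
/- Let a, b be natural numbers with a ≤ b. Let g : ℕ³ → ℝ, F : ℕ³ × ℕ³ × ℝ → ℝ, and nonnegative r, f : ℕ³ → ℝ satisfy the Lipschitz-type condition |F(x,y,z,s,t,q,w) − F(x,y,z,s,t,q,v)| ≤ r(x,y,z) · f(s,t,q) · |w − v| for all arguments with a ≤ z ≤ b, a ≤ q ≤ b, and all w, v ∈ ℝ. Let u : ℕ³ → ℝ satisfy, for all x, y ∈ ℕ and a ≤ z ≤ b, u(x,y,z) = g(x,y,z) + Σ_{s=0}^{x-1} Σ_{t=0}^{y-1} Σ_{q=a}^{b} F(x,y,z,s,t,q,u(s,t,q)). Define k(x,y,z) = Σ_{s=0}^{x-1} Σ_{t=0}^{y-1} Σ_{q=a}^{b} |F(x,y,z,s,t,q,g(s,t,q))|. Then for all x, y ∈ ℕ and a ≤ z ≤ b one has |u(x,y,z) − g(x,y,z)| ≤ k(x,y,z) + r(x,y,z) · C₃(x,y)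 · ∏_{s=0}^{x-1} (1 + Q₂(s,y)), where C₃(x,y) = Σ_{s=0}^{x-1} Σ_{t=0}^{y-1} Σ_{q=a}^{b} f(s,t,q) k(s,t,q) and Q₂(s,y) = Σ_{t=0}^{y-1} Σ_{q=a}^{b} f(s,t,q) r(s,t,q). -/
open Finset

/-- Discrete Gronwall lemma. -/
lemma stmt_7_gronwall (C Q M : ℕ → ℝ) (hC : ∀ s x, s ≤ x → C s ≤ C x)
    (hQ : ∀ s, 0 ≤ Q s)
    (h : ∀ x, M x ≤ C x + ∑ s ∈ Finset.range x, Q s * M s) :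
    ∀ x, M x ≤ C x * ∏ s ∈ Finset.range x, (1 + Q s) := by
  intro x
  induction x using Nat.strong_induction_on with
  | _ x ih =>
    have hP : ∀ n, (0:ℝ) ≤ ∏ s ∈ Finset.range n, (1 + Q s) := by
      intro n; apply Finset.prod_nonneg; intro i _; nlinarith [hQ i]
    have hid : ∀ n, (∏ s ∈ Finset.range n, (1 + Q s))
        = 1 + ∑ s ∈ Finset.range n, Q s * ∏ t ∈ Finset.range s, (1 + Q t) := by
      intro n
      induction n with
      | zero => simp
      | succ n ihn => rw [Finset.prod_range_succ, Finset.sum_range_succ, ihn]; ring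
    calc M x ≤ C x + ∑ s ∈ Finset.range x, Q s * M s := h x
      _ ≤ C x + ∑ s ∈ Finset.range x, Q s * (C x * ∏ t ∈ Finset.range s, (1 + Q t)) := by
          apply add_le_add_right
          apply Finset.sum_le_sum
          intro s hs
          have h1 := ih s (Finset.mem_range.mp hs)
          have h2 : C s * ∏ t ∈ Finset.range s, (1 + Q t)
              ≤ C x * ∏ t ∈ Finset.range s, (1 + Q t) :=
            mul_le_mul_of_nonneg_right (hC s x (Nat.le_of_lt (Finset.mem_range.mp hs))) (hP s)
          exact mul_le_mul_of_nonneg_left (h1.trans h2) (hQ s)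
      _ = C x * (1 + ∑ s ∈ Finset.range x, Q s * ∏ t ∈ Finset.range s, (1 + Q t)) := by
          rw [mul_add, mul_one, Finset.mul_sum]
          congr 1
          exact Finset.sum_congr rfl fun s _ => by ring
      _ = C x * ∏ s ∈ Finset.range x, (1 + Q s) := by rw [hid]

/-- Discrete (𝕋 = ℤ, restricted to ℕ with base points 0) case of the paper's
Theorem 3.2: estimate of the deviation of a solution of a sum (Volterra-type)
equation in three variables from its forcing term, under a Lipschitz
condition on the kernel. -/
theorem stmt_7 (a b : ℕ) (hab : a ≤ b)
    (g : ℕ → ℕ → ℕ → ℝ) (F : ℕ → ℕ → ℕ → ℕ → ℕ → ℕ → ℝ → ℝ)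
    (r f : ℕ → ℕ → ℕ → ℝ) (u : ℕ → ℕ → ℕ → ℝ) (k : ℕ → ℕ → ℕ → ℝ)
    (hr_nonneg : ∀ x y z, 0 ≤ r x y z)
    (hf_nonneg : ∀ x y z, 0 ≤ f x y z)
    (hF_lip : ∀ x y z s t q, a ≤ z → z ≤ b → a ≤ q → q ≤ b → ∀ w v : ℝ,
      |F x y z s t q w - F x y z s t q v| ≤ r x y z * f s t q * |w - v|)
    (heq : ∀ x y z, a ≤ z → z ≤ b →
      u x y z = g x y z +
        ∑ s ∈ Finset.range x, ∑ t ∈ Finset.range y, ∑ q ∈ Finset.Icc a b,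
          F x y z s t q (u s t q))
    (hk : ∀ x y z, k x y z =
      ∑ s ∈ Finset.range x, ∑ t ∈ Finset.range y, ∑ q ∈ Finset.Icc a b,
        |F x y z s t q (g s t q)|) :
    ∀ x y z, a ≤ z → z ≤ b →
      |u x y z - g x y z| ≤ k x y z + r x y z *
        (∑ s ∈ Finset.range x, ∑ t ∈ Finset.range y, ∑ q ∈ Finset.Icc a b,
          f s t q * k s t q) *
        ∏ s ∈ Finset.range x,
          (1 + ∑ t ∈ Finset.range y, ∑ q ∈ Finset.Icc a b,
            f s t q * r s t q) := by
  -- m x y : accumulated weighted deviation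
  set m : ℕ → ℕ → ℝ := fun x y => ∑ s ∈ Finset.range x, ∑ t ∈ Finset.range y,
      ∑ q ∈ Finset.Icc a b, f s t q * |u s t q - g s t q| with hm_def
  have hk_nonneg : ∀ x y z, 0 ≤ k x y z := by
    intro x y z
    rw [hk]
    apply Finset.sum_nonneg; intro s _
    apply Finset.sum_nonneg; intro t _
    apply Finset.sum_nonneg; intro q _
    exact abs_nonneg _
  have step1 : ∀ x y z, a ≤ z → z ≤ b →
      |u x y z - g x y z| ≤ k x y z + r x y z * m x y := by
    intro x y z hz1 hz2
    have hug : u x y z - g x y z = ∑ s ∈ Finset.range x, ∑ t ∈ Finset.range y,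
        ∑ q ∈ Finset.Icc a b, F x y z s t q (u s t q) := by
      rw [heq x y z hz1 hz2]; ring
    calc |u x y z - g x y z|
        = |∑ s ∈ Finset.range x, ∑ t ∈ Finset.range y,
            ∑ q ∈ Finset.Icc a b, F x y z s t q (u s t q)| := by rw [hug]
      _ ≤ ∑ s ∈ Finset.range x, ∑ t ∈ Finset.range y,
            ∑ q ∈ Finset.Icc a b, |F x y z s t q (u s t q)| := by
          refine (Finset.abs_sum_le_sum_abs _ _).trans ?_
          apply Finset.sum_le_sum; intro s _
          refine (Finset.abs_sum_le_sum_abs _ _).trans ?_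
          apply Finset.sum_le_sum; intro t _
          exact Finset.abs_sum_le_sum_abs _ _
      _ ≤ ∑ s ∈ Finset.range x, ∑ t ∈ Finset.range y, ∑ q ∈ Finset.Icc a b,
            (|F x y z s t q (g s t q)| + r x y z * (f s t q * |u s t q - g s t q|)) := by
          apply Finset.sum_le_sum; intro s _
          apply Finset.sum_le_sum; intro t _
          apply Finset.sum_le_sum; intro q hq
          obtain ⟨hq1, hq2⟩ := Finset.mem_Icc.mp hq
          have h1 := hF_lip x y z s t q hz1 hz2 hq1 hq2 (u s t q) (g s t q)
          calc |F x y z s t q (u s t q)|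
              = |F x y z s t q (g s t q) +
                  (F x y z s t q (u s t q) - F x y z s t q (g s t q))| := by ring_nf
            _ ≤ |F x y z s t q (g s t q)| +
                  |F x y z s t q (u s t q) - F x y z s t q (g s t q)| := abs_add_le _ _
            _ ≤ |F x y z s t q (g s t q)| +
                  r x y z * (f s t q * |u s t q - g s t q|) := by
                  rw [← mul_assoc]; exact add_le_add_right h1 _
      _ = k x y z + r x y z * m x y := by
          rw [hk, hm_def]
          simp only [Finset.sum_add_distrib, ← Finset.mul_sum]
  have hm_nonneg_term : ∀ s t q, 0 ≤ f s t q * |u s t q - g s t q| := by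
    intro s t q; exact mul_nonneg (hf_nonneg s t q) (abs_nonneg _)
  have hm_mono : ∀ s t y, t ≤ y → m s t ≤ m s y := by
    intro s t y hty
    apply Finset.sum_le_sum; intro i _
    apply Finset.sum_le_sum_of_subset_of_nonneg (Finset.range_subset_range.mpr hty)
    intro j _ _
    apply Finset.sum_nonneg; intro q _
    exact hm_nonneg_term i j q
  intro x y z hz1 hz2
  -- Gronwall data for fixed y
  set C : ℕ → ℝ := fun x => ∑ s ∈ Finset.range x, ∑ t ∈ Finset.range y,
      ∑ q ∈ Finset.Icc a b, f s t q * k s t q with hC_def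
  set Q : ℕ → ℝ := fun s => ∑ t ∈ Finset.range y, ∑ q ∈ Finset.Icc a b,
      f s t q * r s t q with hQ_def
  have hCQ_term : ∀ s, 0 ≤ ∑ t ∈ Finset.range y, ∑ q ∈ Finset.Icc a b, f s t q * k s t q := by
    intro s
    apply Finset.sum_nonneg; intro t _
    apply Finset.sum_nonneg; intro q _
    exact mul_nonneg (hf_nonneg s t q) (hk_nonneg s t q)
  have hC_mono : ∀ s x, s ≤ x → C s ≤ C x := by
    intro s x hsx
    apply Finset.sum_le_sum_of_subset_of_nonneg (Finset.range_subset_range.mpr hsx)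
    intro j _ _
    exact hCQ_term j
  have hQ_nonneg : ∀ s, 0 ≤ Q s := by
    intro s
    apply Finset.sum_nonneg; intro t _
    apply Finset.sum_nonneg; intro q _
    exact mul_nonneg (hf_nonneg s t q) (hr_nonneg s t q)
  have step2 : ∀ x, m x y ≤ C x + ∑ s ∈ Finset.range x, Q s * m s y := by
    intro x
    have h1 : m x y ≤ ∑ s ∈ Finset.range x, ∑ t ∈ Finset.range y,
        ∑ q ∈ Finset.Icc a b, f s t q * (k s t q + r s t q * m s y) := by
      rw [hm_def]
      apply Finset.sum_le_sum; intro s _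
      apply Finset.sum_le_sum; intro t ht
      apply Finset.sum_le_sum; intro q hq
      obtain ⟨hq1, hq2⟩ := Finset.mem_Icc.mp hq
      have h2 := step1 s t q hq1 hq2
      have h3 : m s t ≤ m s y := hm_mono s t y (Nat.le_of_lt (Finset.mem_range.mp ht))
      have h4 : |u s t q - g s t q| ≤ k s t q + r s t q * m s y := by
        refine h2.trans ?_
        exact add_le_add_right (mul_le_mul_of_nonneg_left h3 (hr_nonneg s t q)) _
      exact mul_le_mul_of_nonneg_left h4 (hf_nonneg s t q)
    refine h1.trans (le_of_eq ?_)
    rw [hC_def, ← Finset.sum_add_distrib]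
    apply Finset.sum_congr rfl; intro s _
    rw [hQ_def]
    simp only [Finset.sum_mul, ← Finset.sum_add_distrib]
    apply Finset.sum_congr rfl; intro t _
    apply Finset.sum_congr rfl; intro q _
    ring
  have hgron := stmt_7_gronwall C Q (fun x => m x y) hC_mono hQ_nonneg step2 x
  have hfinal := step1 x y z hz1 hz2
  refine hfinal.trans ?_
  rw [mul_assoc]
  exact add_le_add_right (mul_le_mul_of_nonneg_left hgron (hr_nonneg x y z)) _
end

section
/- Let x₀, y₀, a, b be real numbers with a ≤ b, and let H = [x₀,∞) × [y₀,∞) × [a,b]. Let g, v : ℝ³ → ℝ and F, G : ℝ³ × ℝ³ × ℝ → ℝ be continuous, and let r, f : ℝ³ → ℝ be continuous and nonnegative on H, with |F(x,y,z,s,t,q,w) − F(x,y,z,s,t,q,w')| ≤ r(x,y,z) · f(s,t,q) · |w − w'| for all (x,y,z), (s,t,q) ∈ H and all w, w' ∈ ℝ. Let u, h : ℝ³ → ℝ be continuous and satisfy, for all (x,y,z) ∈ H, u(x,y,z) = g(x,y,z) + ∫_{x₀}^{x} ∫_{y₀}^{y} ∫_{a}^{b} F(x,y,z,s,t,q,u(s,t,q))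 dq dt ds and h(x,y,z) = v(x,y,z) + ∫_{x₀}^{x} ∫_{y₀}^{y} ∫_{a}^{b} G(x,y,z,s,t,q,h(s,t,q)) dq dt ds. Define ḡ(x,y,z) = |g(x,y,z) − v(x,y,z)| and k̄(x,y,z) = ∫_{x₀}^{x} ∫_{y₀}^{y} ∫_{a}^{b} |F(x,y,z,s,t,q,h(s,t,q)) − G(x,y,z,s,t,q,h(s,t,q))| dq dt ds. Then for all (x,y,z) ∈ H one has |u(x,y,z) − h(x,y,z)| ≤ [ḡ(x,y,z) + k̄(x,y,z)] + r(x,y,z) · C₄(x,y) · exp(∫_{x₀}^{x} Q₂(s,y) ds), where C₄(x,y) = ∫_{x₀}^{x} ∫_{y₀}^{y} ∫_{a}^{b} f(s,t,q) [ḡ(s,t,q) + k̄(s,t,q)] dq dt ds and Q₂(s,y) = ∫_{y₀}^{y} ∫_{a}^{b} f(s,t,q) r(s,t,q) dq dt. -/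
open intervalIntegral MeasureTheory

private lemma dbl_nonneg {y₀ y a b : ℝ} (hy : y₀ ≤ y) (hab : a ≤ b) {K : ℝ → ℝ → ℝ}
    (hK : ∀ t ∈ Set.Icc y₀ y, ∀ q ∈ Set.Icc a b, 0 ≤ K t q) :
    0 ≤ ∫ t in y₀..y, ∫ q in a..b, K t q :=
  intervalIntegral.integral_nonneg hy fun t ht =>
    intervalIntegral.integral_nonneg hab fun q hq => hK t ht q hq

private lemma trip_nonneg {x₀ x y₀ y a b : ℝ} (hx : x₀ ≤ x) (hy : y₀ ≤ y) (hab : a ≤ b)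
    {K : ℝ → ℝ → ℝ → ℝ}
    (hK : ∀ s ∈ Set.Icc x₀ x, ∀ t ∈ Set.Icc y₀ y, ∀ q ∈ Set.Icc a b, 0 ≤ K s t q) :
    0 ≤ ∫ s in x₀..x, ∫ t in y₀..y, ∫ q in a..b, K s t q :=
  intervalIntegral.integral_nonneg hx fun s hs => dbl_nonneg hy hab (hK s hs)

private lemma dbl_mono {y₀ y a b : ℝ} (hy : y₀ ≤ y) (hab : a ≤ b) {K₁ K₂ : ℝ → ℝ → ℝ}
    (h₁ : Continuous fun p : ℝ × ℝ => K₁ p.1 p.2) (h₂ : Continuous fun p : ℝ × ℝ => K₂ p.1 p.2)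
    (hle : ∀ t ∈ Set.Icc y₀ y, ∀ q ∈ Set.Icc a b, K₁ t q ≤ K₂ t q) :
    (∫ t in y₀..y, ∫ q in a..b, K₁ t q) ≤ ∫ t in y₀..y, ∫ q in a..b, K₂ t q := by
  refine intervalIntegral.integral_mono_on hy
    (Continuous.intervalIntegrable (by fun_prop) _ _)
    (Continuous.intervalIntegrable (by fun_prop) _ _) ?_
  intro t ht
  exact intervalIntegral.integral_mono_on hab
    (Continuous.intervalIntegrable (by fun_prop) _ _)
    (Continuous.intervalIntegrable (by fun_prop) _ _) (hle t ht)

private lemma trip_mono {x₀ x y₀ y a b : ℝ} (hx : x₀ ≤ x) (hy : y₀ ≤ y) (hab : a ≤ b)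
    {K₁ K₂ : ℝ → ℝ → ℝ → ℝ}
    (h₁ : Continuous fun p : ℝ × ℝ × ℝ => K₁ p.1 p.2.1 p.2.2)
    (h₂ : Continuous fun p : ℝ × ℝ × ℝ => K₂ p.1 p.2.1 p.2.2)
    (hle : ∀ s ∈ Set.Icc x₀ x, ∀ t ∈ Set.Icc y₀ y, ∀ q ∈ Set.Icc a b, K₁ s t q ≤ K₂ s t q) :
    (∫ s in x₀..x, ∫ t in y₀..y, ∫ q in a..b, K₁ s t q)
      ≤ ∫ s in x₀..x, ∫ t in y₀..y, ∫ q in a..b, K₂ s t q := by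
  refine intervalIntegral.integral_mono_on hx
    (Continuous.intervalIntegrable (by fun_prop) _ _)
    (Continuous.intervalIntegrable (by fun_prop) _ _) ?_
  intro s hs
  exact dbl_mono hy hab (by fun_prop) (by fun_prop) (hle s hs)

private lemma dbl_abs {y₀ y a b : ℝ} (hy : y₀ ≤ y) (hab : a ≤ b) {K : ℝ → ℝ → ℝ}
    (hK : Continuous fun p : ℝ × ℝ => K p.1 p.2) :
    |∫ t in y₀..y, ∫ q in a..b, K t q| ≤ ∫ t in y₀..y, ∫ q in a..b, |K t q| :=
  calc |∫ t in y₀..y, ∫ q in a..b, K t q| ≤ ∫ t in y₀..y, |∫ q in a..b, K t q| :=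
        intervalIntegral.abs_integral_le_integral_abs hy
    _ ≤ ∫ t in y₀..y, ∫ q in a..b, |K t q| := by
        refine intervalIntegral.integral_mono_on hy
          (Continuous.intervalIntegrable (by fun_prop) _ _)
          (Continuous.intervalIntegrable (by fun_prop) _ _) ?_
        exact fun t _ => intervalIntegral.abs_integral_le_integral_abs hab

private lemma trip_abs {x₀ x y₀ y a b : ℝ} (hx : x₀ ≤ x) (hy : y₀ ≤ y) (hab : a ≤ b)
    {K : ℝ → ℝ → ℝ → ℝ} (hK : Continuous fun p : ℝ × ℝ × ℝ => K p.1 p.2.1 p.2.2) :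
    |∫ s in x₀..x, ∫ t in y₀..y, ∫ q in a..b, K s t q|
      ≤ ∫ s in x₀..x, ∫ t in y₀..y, ∫ q in a..b, |K s t q| :=
  calc |∫ s in x₀..x, ∫ t in y₀..y, ∫ q in a..b, K s t q|
      ≤ ∫ s in x₀..x, |∫ t in y₀..y, ∫ q in a..b, K s t q| :=
        intervalIntegral.abs_integral_le_integral_abs hx
    _ ≤ ∫ s in x₀..x, ∫ t in y₀..y, ∫ q in a..b, |K s t q| := by
        refine intervalIntegral.integral_mono_on hx
          (Continuous.intervalIntegrable (by fun_prop) _ _)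
          (Continuous.intervalIntegrable (by fun_prop) _ _) ?_
        exact fun s _ => dbl_abs hy hab (by fun_prop)

private lemma dbl_add {y₀ y a b : ℝ} {K₁ K₂ : ℝ → ℝ → ℝ}
    (h₁ : Continuous fun p : ℝ × ℝ => K₁ p.1 p.2) (h₂ : Continuous fun p : ℝ × ℝ => K₂ p.1 p.2) :
    (∫ t in y₀..y, ∫ q in a..b, (K₁ t q + K₂ t q))
      = (∫ t in y₀..y, ∫ q in a..b, K₁ t q) + ∫ t in y₀..y, ∫ q in a..b, K₂ t q := by
  rw [intervalIntegral.integral_congr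
    (g := fun t => (∫ q in a..b, K₁ t q) + ∫ q in a..b, K₂ t q)
    (fun t _ => intervalIntegral.integral_add
      (Continuous.intervalIntegrable (by fun_prop) _ _)
      (Continuous.intervalIntegrable (by fun_prop) _ _))]
  exact intervalIntegral.integral_add
    (Continuous.intervalIntegrable (by fun_prop) _ _)
    (Continuous.intervalIntegrable (by fun_prop) _ _)

private lemma trip_add {x₀ x y₀ y a b : ℝ} {K₁ K₂ : ℝ → ℝ → ℝ → ℝ}
    (h₁ : Continuous fun p : ℝ × ℝ × ℝ => K₁ p.1 p.2.1 p.2.2)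
    (h₂ : Continuous fun p : ℝ × ℝ × ℝ => K₂ p.1 p.2.1 p.2.2) :
    (∫ s in x₀..x, ∫ t in y₀..y, ∫ q in a..b, (K₁ s t q + K₂ s t q))
      = (∫ s in x₀..x, ∫ t in y₀..y, ∫ q in a..b, K₁ s t q)
        + ∫ s in x₀..x, ∫ t in y₀..y, ∫ q in a..b, K₂ s t q := by
  rw [intervalIntegral.integral_congr
    (g := fun s => (∫ t in y₀..y, ∫ q in a..b, K₁ s t q)
      + ∫ t in y₀..y, ∫ q in a..b, K₂ s t q)
    (fun s _ => dbl_add (by fun_prop) (by fun_prop))]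
  exact intervalIntegral.integral_add
    (Continuous.intervalIntegrable (by fun_prop) _ _)
    (Continuous.intervalIntegrable (by fun_prop) _ _)

private lemma trip_sub {x₀ x y₀ y a b : ℝ} {K₁ K₂ : ℝ → ℝ → ℝ → ℝ}
    (h₁ : Continuous fun p : ℝ × ℝ × ℝ => K₁ p.1 p.2.1 p.2.2)
    (h₂ : Continuous fun p : ℝ × ℝ × ℝ => K₂ p.1 p.2.1 p.2.2) :
    (∫ s in x₀..x, ∫ t in y₀..y, ∫ q in a..b, (K₁ s t q - K₂ s t q))
      = (∫ s in x₀..x, ∫ t in y₀..y, ∫ q in a..b, K₁ s t q)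
        - ∫ s in x₀..x, ∫ t in y₀..y, ∫ q in a..b, K₂ s t q := by
  rw [intervalIntegral.integral_congr
    (g := fun s => (∫ t in y₀..y, ∫ q in a..b, K₁ s t q)
      - ∫ t in y₀..y, ∫ q in a..b, K₂ s t q)
    (fun s _ => by
      rw [intervalIntegral.integral_congr
        (g := fun t => (∫ q in a..b, K₁ s t q) - ∫ q in a..b, K₂ s t q)
        (fun t _ => intervalIntegral.integral_sub
          (Continuous.intervalIntegrable (by fun_prop) _ _)
          (Continuous.intervalIntegrable (by fun_prop) _ _))]
      exact intervalIntegral.integral_sub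
        (Continuous.intervalIntegrable (by fun_prop) _ _)
        (Continuous.intervalIntegrable (by fun_prop) _ _))]
  exact intervalIntegral.integral_sub
    (Continuous.intervalIntegrable (by fun_prop) _ _)
    (Continuous.intervalIntegrable (by fun_prop) _ _)

private lemma cont_trip_param {x₀ y₀ a b : ℝ} {K : ℝ × ℝ × ℝ → ℝ → ℝ → ℝ → ℝ}
    (hK : Continuous fun w : (ℝ × ℝ × ℝ) × ℝ × ℝ × ℝ => K w.1 w.2.1 w.2.2.1 w.2.2.2) :
    Continuous fun p : ℝ × ℝ × ℝ =>
      ∫ s in x₀..p.1, ∫ t in y₀..p.2.1, ∫ q in a..b, K p s t q := by fun_prop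

private lemma gronwall_core {x₀ x : ℝ} (hx : x₀ ≤ x) {φ c Q : ℝ → ℝ}
    (hφ : Continuous φ) (hc : Continuous c) (hQ : Continuous Q)
    (hc_nn : ∀ s ∈ Set.Icc x₀ x, 0 ≤ c s) (hQ_nn : ∀ s ∈ Set.Icc x₀ x, 0 ≤ Q s)
    (hineq : ∀ s ∈ Set.Icc x₀ x, φ s ≤ c s + Q s * ∫ τ in x₀..s, φ τ) :
    (∫ s in x₀..x, φ s) ≤ (∫ s in x₀..x, c s) * Real.exp (∫ s in x₀..x, Q s) := by
  set Cx := ∫ s in x₀..x, c s with hCx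
  have hRc : Continuous fun s => Q s * ∫ τ in x₀..s, φ τ := by fun_prop
  have hR : ∀ s : ℝ, HasDerivAt (fun u => ∫ τ in x₀..u, Q τ * ∫ τ' in x₀..τ, φ τ')
      (Q s * ∫ τ in x₀..s, φ τ) s := fun s =>
    intervalIntegral.integral_hasDerivAt_right (hRc.intervalIntegrable _ _)
      hRc.aestronglyMeasurable.stronglyMeasurableAtFilter hRc.continuousAt
  have hI : ∀ s : ℝ, HasDerivAt (fun u => ∫ τ in x₀..u, Q τ) (Q s) s := fun s =>
    intervalIntegral.integral_hasDerivAt_right (hQ.intervalIntegrable _ _)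
      hQ.aestronglyMeasurable.stronglyMeasurableAtFilter hQ.continuousAt
  have hE : ∀ s : ℝ, HasDerivAt
      (fun u => (Cx + ∫ τ in x₀..u, Q τ * ∫ τ' in x₀..τ, φ τ')
        * Real.exp (-(∫ τ in x₀..u, Q τ)))
      ((Q s * ∫ τ in x₀..s, φ τ) * Real.exp (-(∫ τ in x₀..s, Q τ))
        + (Cx + ∫ τ in x₀..s, Q τ * ∫ τ' in x₀..τ, φ τ')
          * (Real.exp (-(∫ τ in x₀..s, Q τ)) * -(Q s))) s := fun s =>
    (((hR s).const_add Cx).mul ((hI s).neg.exp))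
  have hBR : ∀ s ∈ Set.Icc x₀ x,
      (∫ τ in x₀..s, φ τ) ≤ Cx + ∫ τ in x₀..s, Q τ * ∫ τ' in x₀..τ, φ τ' := by
    intro s hs
    have h1 : (∫ τ in x₀..s, φ τ) ≤ ∫ τ in x₀..s, (c τ + Q τ * ∫ τ' in x₀..τ, φ τ') :=
      intervalIntegral.integral_mono_on hs.1 (hφ.intervalIntegrable _ _)
        ((hc.add hRc).intervalIntegrable _ _)
        (fun τ hτ => hineq τ ⟨hτ.1, hτ.2.trans hs.2⟩)
    have h2 : (∫ τ in x₀..s, (c τ + Q τ * ∫ τ' in x₀..τ, φ τ'))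
        = (∫ τ in x₀..s, c τ) + ∫ τ in x₀..s, Q τ * ∫ τ' in x₀..τ, φ τ' :=
      intervalIntegral.integral_add (hc.intervalIntegrable _ _) (hRc.intervalIntegrable _ _)
    have h3 : (∫ τ in x₀..s, c τ) ≤ Cx := by
      rw [hCx]
      refine intervalIntegral.integral_mono_interval le_rfl hs.1 hs.2 ?_
        (hc.intervalIntegrable _ _)
      filter_upwards [MeasureTheory.ae_restrict_mem measurableSet_Ioc] with τ hτ
      exact hc_nn τ ⟨hτ.1.le, hτ.2⟩
    linarith
  have hanti : AntitoneOn
      (fun u => (Cx + ∫ τ in x₀..u, Q τ * ∫ τ' in x₀..τ, φ τ')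
        * Real.exp (-(∫ τ in x₀..u, Q τ))) (Set.Icc x₀ x) := by
    refine antitoneOn_of_deriv_nonpos (convex_Icc _ _) (Continuous.continuousOn (by fun_prop))
      (fun s _ => (hE s).differentiableAt.differentiableWithinAt) ?_
    intro s hs
    rw [interior_Icc] at hs
    rw [(hE s).deriv]
    have h2 : (0:ℝ) < Real.exp (-(∫ τ in x₀..s, Q τ)) := Real.exp_pos _
    have h3 := hBR s ⟨hs.1.le, hs.2.le⟩
    have h4 := hQ_nn s ⟨hs.1.le, hs.2.le⟩
    nlinarith [mul_le_mul_of_nonneg_left h3 h4]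
  have hfin := hanti (Set.left_mem_Icc.mpr hx) (Set.right_mem_Icc.mpr hx) hx
  simp only [intervalIntegral.integral_same, add_zero, neg_zero, Real.exp_zero, mul_one] at hfin
  have h5 := mul_le_mul_of_nonneg_right hfin (Real.exp_pos (∫ τ in x₀..x, Q τ)).le
  rw [mul_assoc, ← Real.exp_add, neg_add_cancel, Real.exp_zero, mul_one] at h5
  have h6 := hBR x (Set.right_mem_Icc.mpr hx)
  linarith

private lemma gronwall3 {x₀ y₀ a b : ℝ} (hab : a ≤ b) {w A r f : ℝ → ℝ → ℝ → ℝ}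
    (hw : Continuous fun p : ℝ × ℝ × ℝ => w p.1 p.2.1 p.2.2)
    (hA : Continuous fun p : ℝ × ℝ × ℝ => A p.1 p.2.1 p.2.2)
    (hr : Continuous fun p : ℝ × ℝ × ℝ => r p.1 p.2.1 p.2.2)
    (hf : Continuous fun p : ℝ × ℝ × ℝ => f p.1 p.2.1 p.2.2)
    (hw_nn : ∀ x, x₀ ≤ x → ∀ y, y₀ ≤ y → ∀ z ∈ Set.Icc a b, 0 ≤ w x y z)
    (hA_nn : ∀ x, x₀ ≤ x → ∀ y, y₀ ≤ y → ∀ z ∈ Set.Icc a b, 0 ≤ A x y z)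
    (hr_nn : ∀ x, x₀ ≤ x → ∀ y, y₀ ≤ y → ∀ z ∈ Set.Icc a b, 0 ≤ r x y z)
    (hf_nn : ∀ x, x₀ ≤ x → ∀ y, y₀ ≤ y → ∀ z ∈ Set.Icc a b, 0 ≤ f x y z)
    (key : ∀ x, x₀ ≤ x → ∀ y, y₀ ≤ y → ∀ z ∈ Set.Icc a b,
      w x y z ≤ A x y z + r x y z *
        ∫ s in x₀..x, ∫ t in y₀..y, ∫ q in a..b, f s t q * w s t q) :
    ∀ x, x₀ ≤ x → ∀ y, y₀ ≤ y → ∀ z ∈ Set.Icc a b,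
      w x y z ≤ A x y z + r x y z *
        (∫ s in x₀..x, ∫ t in y₀..y, ∫ q in a..b, f s t q * A s t q) *
        Real.exp (∫ s in x₀..x, ∫ t in y₀..y, ∫ q in a..b, f s t q * r s t q) := by
  intro x hx y hy z hz
  have hBmono : ∀ s, x₀ ≤ s → ∀ t, y₀ ≤ t → t ≤ y →
      (∫ τ in x₀..s, ∫ t' in y₀..t, ∫ q in a..b, f τ t' q * w τ t' q)
        ≤ ∫ τ in x₀..s, ∫ t' in y₀..y, ∫ q in a..b, f τ t' q * w τ t' q := by
    intro s hs t ht hty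
    refine intervalIntegral.integral_mono_on hs
      (Continuous.intervalIntegrable (by fun_prop) _ _)
      (Continuous.intervalIntegrable (by fun_prop) _ _) ?_
    intro τ hτ
    refine intervalIntegral.integral_mono_interval le_rfl ht hty ?_
      (Continuous.intervalIntegrable (by fun_prop) _ _)
    filter_upwards [MeasureTheory.ae_restrict_mem measurableSet_Ioc] with t' ht'
    exact intervalIntegral.integral_nonneg hab fun q hq =>
      mul_nonneg (hf_nn τ hτ.1 t' ht'.1.le q hq) (hw_nn τ hτ.1 t' ht'.1.le q hq)
  have hineq : ∀ s ∈ Set.Icc x₀ x,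
      (∫ t in y₀..y, ∫ q in a..b, f s t q * w s t q)
        ≤ (∫ t in y₀..y, ∫ q in a..b, f s t q * A s t q)
          + (∫ t in y₀..y, ∫ q in a..b, f s t q * r s t q)
            * ∫ τ in x₀..s, ∫ t in y₀..y, ∫ q in a..b, f τ t q * w τ t q := by
    intro s hs
    set Bs := ∫ τ in x₀..s, ∫ t in y₀..y, ∫ q in a..b, f τ t q * w τ t q with hBsdef
    have h1 : (∫ t in y₀..y, ∫ q in a..b, f s t q * w s t q)
        ≤ ∫ t in y₀..y, ∫ q in a..b, (f s t q * A s t q + (f s t q * r s t q) * Bs) := by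
      refine dbl_mono hy hab (by fun_prop) (by fun_prop) ?_
      intro t ht q hq
      have hk := key s hs.1 t ht.1 q hq
      have hm := hBmono s hs.1 t ht.1 ht.2
      rw [← hBsdef] at hm
      have hf0 := hf_nn s hs.1 t ht.1 q hq
      have hr0 := hr_nn s hs.1 t ht.1 q hq
      have hwb : w s t q ≤ A s t q + r s t q * Bs := by
        have := mul_le_mul_of_nonneg_left hm hr0
        linarith
      calc f s t q * w s t q ≤ f s t q * (A s t q + r s t q * Bs) :=
            mul_le_mul_of_nonneg_left hwb hf0
        _ = f s t q * A s t q + (f s t q * r s t q) * Bs := by ring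
    have h2 : (∫ t in y₀..y, ∫ q in a..b, (f s t q * A s t q + (f s t q * r s t q) * Bs))
        = (∫ t in y₀..y, ∫ q in a..b, f s t q * A s t q)
          + (∫ t in y₀..y, ∫ q in a..b, f s t q * r s t q) * Bs := by
      rw [dbl_add (by fun_prop) (by fun_prop)]
      congr 1
      simp only [intervalIntegral.integral_mul_const]
    linarith
  have hcore := gronwall_core hx
    (φ := fun s => ∫ t in y₀..y, ∫ q in a..b, f s t q * w s t q)
    (c := fun s => ∫ t in y₀..y, ∫ q in a..b, f s t q * A s t q)
    (Q := fun s => ∫ t in y₀..y, ∫ q in a..b, f s t q * r s t q)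
    (by fun_prop) (by fun_prop) (by fun_prop)
    (fun s hs => dbl_nonneg hy hab fun t ht q hq =>
      mul_nonneg (hf_nn s hs.1 t ht.1 q hq) (hA_nn s hs.1 t ht.1 q hq))
    (fun s hs => dbl_nonneg hy hab fun t ht q hq =>
      mul_nonneg (hf_nn s hs.1 t ht.1 q hq) (hr_nn s hs.1 t ht.1 q hq))
    hineq
  have hk := key x hx y hy z hz
  have hr0 := hr_nn x hx y hy z hz
  have h7 := mul_le_mul_of_nonneg_left hcore hr0
  calc w x y z ≤ A x y z + r x y z *
        ∫ s in x₀..x, ∫ t in y₀..y, ∫ q in a..b, f s t q * w s t q := hk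
    _ ≤ A x y z + r x y z *
        ((∫ s in x₀..x, ∫ t in y₀..y, ∫ q in a..b, f s t q * A s t q) *
          Real.exp (∫ s in x₀..x, ∫ t in y₀..y, ∫ q in a..b, f s t q * r s t q)) := by
        linarith
    _ = A x y z + r x y z *
        (∫ s in x₀..x, ∫ t in y₀..y, ∫ q in a..b, f s t q * A s t q) *
        Real.exp (∫ s in x₀..x, ∫ t in y₀..y, ∫ q in a..b, f s t q * r s t q) := by
        ring

/-- Continuous (𝕋 = ℝ) case of the paper's Theorem 3.3: comparison between
solutions of two Volterra-type integral equations in three variables with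
different kernels and forcing terms. -/
theorem stmt_8 (x₀ y₀ a b : ℝ) (hab : a ≤ b)
    (g v : ℝ → ℝ → ℝ → ℝ) (F G : ℝ → ℝ → ℝ → ℝ → ℝ → ℝ → ℝ → ℝ)
    (r f : ℝ → ℝ → ℝ → ℝ) (u h : ℝ → ℝ → ℝ → ℝ)
    (gbar kbar : ℝ → ℝ → ℝ → ℝ)
    (hg_cont : Continuous (fun p : ℝ × ℝ × ℝ => g p.1 p.2.1 p.2.2))
    (hv_cont : Continuous (fun p : ℝ × ℝ × ℝ => v p.1 p.2.1 p.2.2))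
    (hF_cont : Continuous (fun p : (ℝ × ℝ × ℝ) × (ℝ × ℝ × ℝ) × ℝ =>
      F p.1.1 p.1.2.1 p.1.2.2 p.2.1.1 p.2.1.2.1 p.2.1.2.2 p.2.2))
    (hG_cont : Continuous (fun p : (ℝ × ℝ × ℝ) × (ℝ × ℝ × ℝ) × ℝ =>
      G p.1.1 p.1.2.1 p.1.2.2 p.2.1.1 p.2.1.2.1 p.2.1.2.2 p.2.2))
    (hr_cont : Continuous (fun p : ℝ × ℝ × ℝ => r p.1 p.2.1 p.2.2))
    (hf_cont : Continuous (fun p : ℝ × ℝ × ℝ => f p.1 p.2.1 p.2.2))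
    (hu_cont : Continuous (fun p : ℝ × ℝ × ℝ => u p.1 p.2.1 p.2.2))
    (hh_cont : Continuous (fun p : ℝ × ℝ × ℝ => h p.1 p.2.1 p.2.2))
    (hr_nonneg : ∀ x, x₀ ≤ x → ∀ y, y₀ ≤ y → ∀ z ∈ Set.Icc a b, 0 ≤ r x y z)
    (hf_nonneg : ∀ x, x₀ ≤ x → ∀ y, y₀ ≤ y → ∀ z ∈ Set.Icc a b, 0 ≤ f x y z)
    (hF_lip : ∀ x, x₀ ≤ x → ∀ y, y₀ ≤ y → ∀ z ∈ Set.Icc a b,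
      ∀ s, x₀ ≤ s → ∀ t, y₀ ≤ t → ∀ q ∈ Set.Icc a b, ∀ w w' : ℝ,
        |F x y z s t q w - F x y z s t q w'| ≤ r x y z * f s t q * |w - w'|)
    (heq_u : ∀ x, x₀ ≤ x → ∀ y, y₀ ≤ y → ∀ z ∈ Set.Icc a b,
      u x y z = g x y z +
        ∫ s in x₀..x, ∫ t in y₀..y, ∫ q in a..b, F x y z s t q (u s t q))
    (heq_h : ∀ x, x₀ ≤ x → ∀ y, y₀ ≤ y → ∀ z ∈ Set.Icc a b,
      h x y z = v x y z +
        ∫ s in x₀..x, ∫ t in y₀..y, ∫ q in a..b, G x y z s t q (h s t q))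
    (hgbar : ∀ x y z : ℝ, gbar x y z = |g x y z - v x y z|)
    (hkbar : ∀ x y z : ℝ, kbar x y z =
      ∫ s in x₀..x, ∫ t in y₀..y, ∫ q in a..b,
        |F x y z s t q (h s t q) - G x y z s t q (h s t q)|) :
    ∀ x, x₀ ≤ x → ∀ y, y₀ ≤ y → ∀ z ∈ Set.Icc a b,
      |u x y z - h x y z| ≤ (gbar x y z + kbar x y z) + r x y z *
        (∫ s in x₀..x, ∫ t in y₀..y, ∫ q in a..b,
          f s t q * (gbar s t q + kbar s t q)) *
        Real.exp (∫ s in x₀..x, ∫ t in y₀..y, ∫ q in a..b,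
          f s t q * r s t q) := by
  -- continuity of gbar and kbar
  have hgbar_cont : Continuous fun p : ℝ × ℝ × ℝ => gbar p.1 p.2.1 p.2.2 := by
    have hrw : (fun p : ℝ × ℝ × ℝ => gbar p.1 p.2.1 p.2.2)
        = fun p : ℝ × ℝ × ℝ => |g p.1 p.2.1 p.2.2 - v p.1 p.2.1 p.2.2| :=
      funext fun p => hgbar p.1 p.2.1 p.2.2
    rw [hrw]; exact (hg_cont.sub hv_cont).abs
  have hC2 : Continuous fun q' : (ℝ × ℝ × ℝ) × ℝ × ℝ × ℝ =>
      ((q'.2.1, q'.2.2.1, q'.2.2.2) : ℝ × ℝ × ℝ) := by fun_prop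
  have hmap : Continuous fun q' : (ℝ × ℝ × ℝ) × ℝ × ℝ × ℝ =>
      ((q'.1, ((q'.2.1, q'.2.2.1, q'.2.2.2), h q'.2.1 q'.2.2.1 q'.2.2.2))
        : (ℝ × ℝ × ℝ) × (ℝ × ℝ × ℝ) × ℝ) :=
    continuous_fst.prodMk (hC2.prodMk (hh_cont.comp hC2))
  have hKk : Continuous fun q' : (ℝ × ℝ × ℝ) × ℝ × ℝ × ℝ =>
      |F q'.1.1 q'.1.2.1 q'.1.2.2 q'.2.1 q'.2.2.1 q'.2.2.2 (h q'.2.1 q'.2.2.1 q'.2.2.2)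
        - G q'.1.1 q'.1.2.1 q'.1.2.2 q'.2.1 q'.2.2.1 q'.2.2.2 (h q'.2.1 q'.2.2.1 q'.2.2.2)| :=
    ((hF_cont.comp hmap).sub (hG_cont.comp hmap)).abs
  have hkbar_cont : Continuous fun p : ℝ × ℝ × ℝ => kbar p.1 p.2.1 p.2.2 := by
    have hrw : (fun p : ℝ × ℝ × ℝ => kbar p.1 p.2.1 p.2.2)
        = fun p : ℝ × ℝ × ℝ => ∫ s in x₀..p.1, ∫ t in y₀..p.2.1, ∫ q in a..b,
            |F p.1 p.2.1 p.2.2 s t q (h s t q) - G p.1 p.2.1 p.2.2 s t q (h s t q)| :=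
      funext fun p => hkbar p.1 p.2.1 p.2.2
    rw [hrw]
    exact cont_trip_param hKk
  -- the key Volterra estimate
  have key1 : ∀ x, x₀ ≤ x → ∀ y, y₀ ≤ y → ∀ z ∈ Set.Icc a b,
      |u x y z - h x y z| ≤ (gbar x y z + kbar x y z) + r x y z *
        ∫ s in x₀..x, ∫ t in y₀..y, ∫ q in a..b,
          f s t q * |u s t q - h s t q| := by
    intro x hx y hy z hz
    have hFu : Continuous fun p : ℝ × ℝ × ℝ =>
        F x y z p.1 p.2.1 p.2.2 (u p.1 p.2.1 p.2.2) :=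
      hF_cont.comp ((continuous_const : Continuous fun _ : ℝ × ℝ × ℝ => ((x, y, z) : ℝ × ℝ × ℝ)).prodMk
        (continuous_id.prodMk hu_cont))
    have hGh : Continuous fun p : ℝ × ℝ × ℝ =>
        G x y z p.1 p.2.1 p.2.2 (h p.1 p.2.1 p.2.2) :=
      hG_cont.comp ((continuous_const : Continuous fun _ : ℝ × ℝ × ℝ => ((x, y, z) : ℝ × ℝ × ℝ)).prodMk
        (continuous_id.prodMk hh_cont))
    have hFh : Continuous fun p : ℝ × ℝ × ℝ =>
        F x y z p.1 p.2.1 p.2.2 (h p.1 p.2.1 p.2.2) :=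
      hF_cont.comp ((continuous_const : Continuous fun _ : ℝ × ℝ × ℝ => ((x, y, z) : ℝ × ℝ × ℝ)).prodMk
        (continuous_id.prodMk hh_cont))
    have e1 : u x y z - h x y z = (g x y z - v x y z)
        + ((∫ s in x₀..x, ∫ t in y₀..y, ∫ q in a..b, F x y z s t q (u s t q))
          - ∫ s in x₀..x, ∫ t in y₀..y, ∫ q in a..b, G x y z s t q (h s t q)) := by
      rw [heq_u x hx y hy z hz, heq_h x hx y hy z hz]; ring
    have e2 : (∫ s in x₀..x, ∫ t in y₀..y, ∫ q in a..b, F x y z s t q (u s t q))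
        - (∫ s in x₀..x, ∫ t in y₀..y, ∫ q in a..b, G x y z s t q (h s t q))
        = ∫ s in x₀..x, ∫ t in y₀..y, ∫ q in a..b,
            (F x y z s t q (u s t q) - G x y z s t q (h s t q)) :=
      (trip_sub hFu hGh).symm
    have e3 : (∫ s in x₀..x, ∫ t in y₀..y, ∫ q in a..b,
          (r x y z * (f s t q * |u s t q - h s t q|)
            + |F x y z s t q (h s t q) - G x y z s t q (h s t q)|))
        = r x y z * (∫ s in x₀..x, ∫ t in y₀..y, ∫ q in a..b,
            f s t q * |u s t q - h s t q|) + kbar x y z := by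
      rw [trip_add (continuous_const.mul (hf_cont.mul (hu_cont.sub hh_cont).abs))
        ((hFh.sub hGh).abs)]
      rw [hkbar x y z]
      congr 1
      simp only [intervalIntegral.integral_const_mul]
    calc |u x y z - h x y z|
        = |(g x y z - v x y z)
          + ((∫ s in x₀..x, ∫ t in y₀..y, ∫ q in a..b, F x y z s t q (u s t q))
            - ∫ s in x₀..x, ∫ t in y₀..y, ∫ q in a..b, G x y z s t q (h s t q))| := by
          rw [e1]
      _ ≤ |g x y z - v x y z|
          + |(∫ s in x₀..x, ∫ t in y₀..y, ∫ q in a..b, F x y z s t q (u s t q))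
            - ∫ s in x₀..x, ∫ t in y₀..y, ∫ q in a..b, G x y z s t q (h s t q)| :=
          abs_add_le _ _
      _ = gbar x y z + |∫ s in x₀..x, ∫ t in y₀..y, ∫ q in a..b,
            (F x y z s t q (u s t q) - G x y z s t q (h s t q))| := by
          rw [← hgbar x y z, e2]
      _ ≤ gbar x y z + ∫ s in x₀..x, ∫ t in y₀..y, ∫ q in a..b,
            |F x y z s t q (u s t q) - G x y z s t q (h s t q)| :=
          add_le_add_right (trip_abs hx hy hab (hFu.sub hGh)) _
      _ ≤ gbar x y z + ∫ s in x₀..x, ∫ t in y₀..y, ∫ q in a..b,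
            (r x y z * (f s t q * |u s t q - h s t q|)
              + |F x y z s t q (h s t q) - G x y z s t q (h s t q)|) := by
          refine add_le_add_right (trip_mono hx hy hab ((hFu.sub hGh).abs)
            ((continuous_const.mul (hf_cont.mul (hu_cont.sub hh_cont).abs)).add
              ((hFh.sub hGh).abs)) ?_) _
          intro s hs t ht q hq
          have h1 := abs_sub_le (F x y z s t q (u s t q)) (F x y z s t q (h s t q))
            (G x y z s t q (h s t q))
          have h2 := hF_lip x hx y hy z hz s hs.1 t ht.1 q hq (u s t q) (h s t q)
          rw [mul_assoc] at h2
          linarith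
      _ = gbar x y z + (r x y z * (∫ s in x₀..x, ∫ t in y₀..y, ∫ q in a..b,
            f s t q * |u s t q - h s t q|) + kbar x y z) := by rw [e3]
      _ = (gbar x y z + kbar x y z) + r x y z *
            ∫ s in x₀..x, ∫ t in y₀..y, ∫ q in a..b,
              f s t q * |u s t q - h s t q| := by ring
  -- apply the Gronwall comparison
  exact gronwall3 hab
    (w := fun s t q => |u s t q - h s t q|)
    (A := fun s t q => gbar s t q + kbar s t q)
    (r := r) (f := f)
    ((hu_cont.sub hh_cont).abs) (hgbar_cont.add hkbar_cont) hr_cont hf_cont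
    (fun x hx y hy z hz => abs_nonneg _)
    (fun x hx y hy z hz => add_nonneg (by rw [hgbar]; exact abs_nonneg _)
      (by rw [hkbar]; exact trip_nonneg hx hy hab fun s _ t _ q _ => abs_nonneg _))
    hr_nonneg hf_nonneg key1
end

section
/- Let a, b be natural numbers with a ≤ b. Let g, v : ℕ³ → ℝ, F, G : ℕ³ × ℕ³ × ℝ → ℝ, and nonnegative r, f : ℕ³ → ℝ satisfy |F(x,y,z,s,t,q,w) − F(x,y,z,s,t,q,w')| ≤ r(x,y,z) · f(s,t,q) · |w − w'| for all arguments with a ≤ z ≤ b, a ≤ q ≤ b, and all w, w' ∈ ℝ. Let u, h : ℕ³ → ℝ satisfy, for all x, y ∈ ℕ and a ≤ z ≤ b, u(x,y,z) = g(x,y,z) + Σ_{s=0}^{x-1} Σ_{t=0}^{y-1} Σ_{q=a}^{b} F(x,y,z,s,t,q,u(s,t,q)) and h(x,y,z) = v(x,y,z) + Σ_{s=0}^{x-1} Σ_{t=0}^{y-1} Σ_{q=a}^{b} G(x,y,z,s,t,q,h(s,t,q)). Define ḡ(x,y,z) = |g(x,y,z) − v(x,y,z)| and k̄(x,y,z)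 = Σ_{s=0}^{x-1} Σ_{t=0}^{y-1} Σ_{q=a}^{b} |F(x,y,z,s,t,q,h(s,t,q)) − G(x,y,z,s,t,q,h(s,t,q))|. Then for all x, y ∈ ℕ and a ≤ z ≤ b one has |u(x,y,z) − h(x,y,z)| ≤ [ḡ(x,y,z) + k̄(x,y,z)] + r(x,y,z) · C₄(x,y) · ∏_{s=0}^{x-1} (1 + Q₂(s,y)), where C₄(x,y) = Σ_{s=0}^{x-1} Σ_{t=0}^{y-1} Σ_{q=a}^{b} f(s,t,q) [ḡ(s,t,q) + k̄(s,t,q)] and Q₂(s,y) = Σ_{t=0}^{y-1} Σ_{q=a}^{b} f(s,t,q) r(s,t,q). -/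
open Finset

private lemma abs_triple_sum_sub (X Y Z : Finset ℕ) (A B : ℕ → ℕ → ℕ → ℝ) :
    |(∑ s ∈ X, ∑ t ∈ Y, ∑ q ∈ Z, A s t q) - ∑ s ∈ X, ∑ t ∈ Y, ∑ q ∈ Z, B s t q| ≤
      ∑ s ∈ X, ∑ t ∈ Y, ∑ q ∈ Z, |A s t q - B s t q| := by
  rw [← Finset.sum_sub_distrib]
  refine (Finset.abs_sum_le_sum_abs _ _).trans (Finset.sum_le_sum fun s _ => ?_)
  rw [← Finset.sum_sub_distrib]
  refine (Finset.abs_sum_le_sum_abs _ _).trans (Finset.sum_le_sum fun t _ => ?_)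
  rw [← Finset.sum_sub_distrib]
  exact Finset.abs_sum_le_sum_abs _ _

private lemma gronwall_disc (C Q ψ : ℕ → ℝ) (hC : ∀ s, 0 ≤ C s) (hQ : ∀ s, 0 ≤ Q s)
    (hψ : ∀ x, ψ x ≤ ∑ s ∈ range x, (C s + Q s * ψ s)) :
    ∀ x, ψ x ≤ (∑ s ∈ range x, C s) * ∏ s ∈ range x, (1 + Q s) := by
  have hP : ∀ x, (1:ℝ) ≤ ∏ s ∈ range x, (1 + Q s) := by
    intro x
    induction x with
    | zero => simp
    | succ n ih =>
      rw [Finset.prod_range_succ]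
      nlinarith [hQ n]
  have hS : ∀ x, (0:ℝ) ≤ ∑ s ∈ range x, C s :=
    fun x => Finset.sum_nonneg fun i _ => hC i
  have key : ∀ x, (∑ s ∈ range x, (C s + Q s * ψ s)) ≤
      (∑ s ∈ range x, C s) * ∏ s ∈ range x, (1 + Q s) := by
    intro x
    induction x with
    | zero => simp
    | succ n ih =>
      rw [Finset.sum_range_succ, Finset.sum_range_succ, Finset.prod_range_succ]
      have h1 : ψ n ≤ (∑ s ∈ range n, C s) * ∏ s ∈ range n, (1 + Q s) := (hψ n).trans ih
      have h2 := hP n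
      have h3 := hS n
      have h4 := hQ n
      have h5 := hC n
      nlinarith [mul_le_mul_of_nonneg_left h1 h4, mul_nonneg h4 h3,
        mul_le_mul_of_nonneg_left h2 h5]
  exact fun x => (hψ x).trans (key x)



/-- Discrete (𝕋 = ℤ, restricted to ℕ with base points 0) case of the paper's
Theorem 3.3: comparison between solutions of two sum (Volterra-type)
equations in three variables with different kernels and forcing terms. -/
theorem stmt_9 (a b : ℕ) (hab : a ≤ b)
    (g v : ℕ → ℕ → ℕ → ℝ) (F G : ℕ → ℕ → ℕ → ℕ → ℕ → ℕ → ℝ → ℝ)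
    (r f : ℕ → ℕ → ℕ → ℝ) (u h : ℕ → ℕ → ℕ → ℝ)
    (gbar kbar : ℕ → ℕ → ℕ → ℝ)
    (hr_nonneg : ∀ x y z, 0 ≤ r x y z)
    (hf_nonneg : ∀ x y z, 0 ≤ f x y z)
    (hF_lip : ∀ x y z s t q, a ≤ z → z ≤ b → a ≤ q → q ≤ b → ∀ w w' : ℝ,
      |F x y z s t q w - F x y z s t q w'| ≤ r x y z * f s t q * |w - w'|)
    (heq_u : ∀ x y z, a ≤ z → z ≤ b →
      u x y z = g x y z +
        ∑ s ∈ Finset.range x, ∑ t ∈ Finset.range y, ∑ q ∈ Finset.Icc a b,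
          F x y z s t q (u s t q))
    (heq_h : ∀ x y z, a ≤ z → z ≤ b →
      h x y z = v x y z +
        ∑ s ∈ Finset.range x, ∑ t ∈ Finset.range y, ∑ q ∈ Finset.Icc a b,
          G x y z s t q (h s t q))
    (hgbar : ∀ x y z, gbar x y z = |g x y z - v x y z|)
    (hkbar : ∀ x y z, kbar x y z =
      ∑ s ∈ Finset.range x, ∑ t ∈ Finset.range y, ∑ q ∈ Finset.Icc a b,
        |F x y z s t q (h s t q) - G x y z s t q (h s t q)|) :
    ∀ x y z, a ≤ z → z ≤ b →
      |u x y z - h x y z| ≤ (gbar x y z + kbar x y z) + r x y z *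
        (∑ s ∈ Finset.range x, ∑ t ∈ Finset.range y, ∑ q ∈ Finset.Icc a b,
          f s t q * (gbar s t q + kbar s t q)) *
        ∏ s ∈ Finset.range x,
          (1 + ∑ t ∈ Finset.range y, ∑ q ∈ Finset.Icc a b,
            f s t q * r s t q) := by
  have hgbar_nn : ∀ x y z, 0 ≤ gbar x y z := fun x y z => (hgbar x y z) ▸ abs_nonneg _
  have hkbar_nn : ∀ x y z, 0 ≤ kbar x y z := by
    intro x y z
    rw [hkbar]
    exact Finset.sum_nonneg fun s _ => Finset.sum_nonneg fun t _ =>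
      Finset.sum_nonneg fun q _ => abs_nonneg _
  -- Step 1: pointwise bound
  have step1 : ∀ x y z, a ≤ z → z ≤ b →
      |u x y z - h x y z| ≤ (gbar x y z + kbar x y z) +
        r x y z * ∑ s ∈ Finset.range x, ∑ t ∈ Finset.range y, ∑ q ∈ Finset.Icc a b,
          f s t q * |u s t q - h s t q| := by
    intro x y z hz1 hz2
    have h1 : u x y z - h x y z =
        (g x y z - v x y z) +
        ((∑ s ∈ Finset.range x, ∑ t ∈ Finset.range y, ∑ q ∈ Finset.Icc a b,
            F x y z s t q (u s t q)) -
         (∑ s ∈ Finset.range x, ∑ t ∈ Finset.range y, ∑ q ∈ Finset.Icc a b,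
            F x y z s t q (h s t q))) +
        ((∑ s ∈ Finset.range x, ∑ t ∈ Finset.range y, ∑ q ∈ Finset.Icc a b,
            F x y z s t q (h s t q)) -
         (∑ s ∈ Finset.range x, ∑ t ∈ Finset.range y, ∑ q ∈ Finset.Icc a b,
            G x y z s t q (h s t q))) := by
      rw [heq_u x y z hz1 hz2, heq_h x y z hz1 hz2]; ring
    rw [h1]
    have hB : |(∑ s ∈ Finset.range x, ∑ t ∈ Finset.range y, ∑ q ∈ Finset.Icc a b,
            F x y z s t q (u s t q)) -
         (∑ s ∈ Finset.range x, ∑ t ∈ Finset.range y, ∑ q ∈ Finset.Icc a b,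
            F x y z s t q (h s t q))| ≤
        r x y z * ∑ s ∈ Finset.range x, ∑ t ∈ Finset.range y, ∑ q ∈ Finset.Icc a b,
          f s t q * |u s t q - h s t q| := by
      refine (abs_triple_sum_sub _ _ _ _ _).trans ?_
      rw [Finset.mul_sum]
      refine Finset.sum_le_sum fun s _ => ?_
      rw [Finset.mul_sum]
      refine Finset.sum_le_sum fun t _ => ?_
      rw [Finset.mul_sum]
      refine Finset.sum_le_sum fun q hq => ?_
      obtain ⟨hq1, hq2⟩ := Finset.mem_Icc.mp hq
      calc |F x y z s t q (u s t q) - F x y z s t q (h s t q)|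
          ≤ r x y z * f s t q * |u s t q - h s t q| :=
            hF_lip x y z s t q hz1 hz2 hq1 hq2 _ _
        _ = r x y z * (f s t q * |u s t q - h s t q|) := by ring
    have hC : |(∑ s ∈ Finset.range x, ∑ t ∈ Finset.range y, ∑ q ∈ Finset.Icc a b,
            F x y z s t q (h s t q)) -
         (∑ s ∈ Finset.range x, ∑ t ∈ Finset.range y, ∑ q ∈ Finset.Icc a b,
            G x y z s t q (h s t q))| ≤ kbar x y z := by
      rw [hkbar]
      exact abs_triple_sum_sub _ _ _ _ _
    have hA : |g x y z - v x y z| = gbar x y z := (hgbar x y z).symm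
    calc |_ + _ + _| ≤ |g x y z - v x y z| + _ + _ := abs_add_three _ _ _
      _ ≤ _ := by rw [hA]; linarith
  -- monotonicity of the inner double sum in the second bound
  intro x y z hz1 hz2
  have hrec : ∀ x' : ℕ,
      (fun x'' => ∑ s ∈ Finset.range x'', ∑ t ∈ Finset.range y, ∑ q ∈ Finset.Icc a b,
        f s t q * |u s t q - h s t q|) x' ≤
      ∑ s ∈ Finset.range x',
        ((fun s => ∑ t ∈ Finset.range y, ∑ q ∈ Finset.Icc a b,
            f s t q * (gbar s t q + kbar s t q)) s +
         (fun s => ∑ t ∈ Finset.range y, ∑ q ∈ Finset.Icc a b, f s t q * r s t q) s *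
         (fun x'' => ∑ s' ∈ Finset.range x'', ∑ t ∈ Finset.range y, ∑ q ∈ Finset.Icc a b,
            f s' t q * |u s' t q - h s' t q|) s) := by
    intro x'
    simp only []
    refine Finset.sum_le_sum fun s _ => ?_
    set P : ℝ := ∑ s' ∈ Finset.range s, ∑ t ∈ Finset.range y, ∑ q ∈ Finset.Icc a b,
        f s' t q * |u s' t q - h s' t q| with hP
    have hrw : (∑ t ∈ Finset.range y, ∑ q ∈ Finset.Icc a b,
          f s t q * (gbar s t q + kbar s t q)) +
        (∑ t ∈ Finset.range y, ∑ q ∈ Finset.Icc a b, f s t q * r s t q) * P =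
        ∑ t ∈ Finset.range y, ∑ q ∈ Finset.Icc a b,
          (f s t q * (gbar s t q + kbar s t q) + f s t q * r s t q * P) := by
      simp only [Finset.sum_mul, Finset.sum_add_distrib]
    rw [hrw]
    refine Finset.sum_le_sum fun t ht => Finset.sum_le_sum fun q hq => ?_
    obtain ⟨hq1, hq2⟩ := Finset.mem_Icc.mp hq
    have h1 := step1 s t q hq1 hq2
    have hmono : (∑ s' ∈ Finset.range s, ∑ t' ∈ Finset.range t, ∑ q' ∈ Finset.Icc a b,
        f s' t' q' * |u s' t' q' - h s' t' q'|) ≤ P := by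
      rw [hP]
      refine Finset.sum_le_sum fun s' _ => ?_
      refine Finset.sum_le_sum_of_subset_of_nonneg
        (Finset.range_subset_range.mpr (le_of_lt (Finset.mem_range.mp ht))) fun t' _ _ => ?_
      exact Finset.sum_nonneg fun q' _ => mul_nonneg (hf_nonneg _ _ _) (abs_nonneg _)
    have h2 : |u s t q - h s t q| ≤ (gbar s t q + kbar s t q) + r s t q * P := by
      refine h1.trans ?_
      have := mul_le_mul_of_nonneg_left hmono (hr_nonneg s t q)
      linarith
    have h3 := mul_le_mul_of_nonneg_left h2 (hf_nonneg s t q)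
    nlinarith []
  have hCnn : ∀ s : ℕ, (0:ℝ) ≤ ∑ t ∈ Finset.range y, ∑ q ∈ Finset.Icc a b,
      f s t q * (gbar s t q + kbar s t q) := by
    intro s
    refine Finset.sum_nonneg fun t _ => Finset.sum_nonneg fun q _ =>
      mul_nonneg (hf_nonneg _ _ _) (by linarith [hgbar_nn s t q, hkbar_nn s t q])
  have hQnn : ∀ s : ℕ, (0:ℝ) ≤ ∑ t ∈ Finset.range y, ∑ q ∈ Finset.Icc a b,
      f s t q * r s t q := by
    intro s
    exact Finset.sum_nonneg fun t _ => Finset.sum_nonneg fun q _ =>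
      mul_nonneg (hf_nonneg _ _ _) (hr_nonneg _ _ _)
  have key := gronwall_disc
    (fun s => ∑ t ∈ Finset.range y, ∑ q ∈ Finset.Icc a b,
      f s t q * (gbar s t q + kbar s t q))
    (fun s => ∑ t ∈ Finset.range y, ∑ q ∈ Finset.Icc a b, f s t q * r s t q)
    (fun x'' => ∑ s ∈ Finset.range x'', ∑ t ∈ Finset.range y, ∑ q ∈ Finset.Icc a b,
      f s t q * |u s t q - h s t q|)
    hCnn hQnn hrec x
  have hs1 := step1 x y z hz1 hz2
  have hfin := mul_le_mul_of_nonneg_left key (hr_nonneg x y z)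
  nlinarith [hfin, hs1]
end
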